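/- arXiv:1302.0050 — 2 statements merged into one kernel-verified Lean document; each statement's English description precedes it below -/
import Mathlib

section
/- Binary Hamming characterization: let 𝒳 = 𝒴 = 𝒳̂ = {0,1}, P_X uniform, with both e and d the Hamming distortion, and 0 < E ≤ 1/2. Then the matching condition holds and R_m(D|E) = max_{W ∈ 𝒲₁(E)} min_{V ∈ 𝒱(E,D)} φ(V,W); moreover the maximizing channel is the binary symmetric channel BSC(E). -/
open scoped BigOperators

noncomputable section

namespace UWZ

/-- real-valued indicator of a proposition. -/
def ind (p : Prop) : ℝ := @ite ℝ p (Classical.propDecidable p) 1 0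

/-- `P` is a probability distribution on the finite type `A`. -/
def IsDist {A : Type*} [Fintype A] (P : A → ℝ) : Prop :=
  (∀ a, 0 ≤ P a) ∧ ∑ a, P a = 1

/-- `W` is a channel from `A` to `B`. -/
def IsChannel {A B : Type*} [Fintype A] [Fintype B] (W : A → B → ℝ) : Prop :=
  ∀ a, IsDist (W a)

/-- the `n`-fold i.i.d. extension of `P`. -/
def iid {A : Type*} (P : A → ℝ) (n : ℕ) (xs : Fin n → A) : ℝ := ∏ t, P (xs t)

/-- the memoryless (`n`-fold i.i.d.) extension of a channel. -/
def memoryless {A B : Type*} (W : A → B → ℝ) (n : ℕ)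
    (xs : Fin n → A) (ys : Fin n → B) : ℝ :=
  ∏ t, W (xs t) (ys t)

/-- the additive (per-letter, normalized) extension of a distortion measure. -/
def dseq {A B : Type*} (d : A → B → ℝ) (n : ℕ) (xs : Fin n → A) (ys : Fin n → B) : ℝ :=
  (∑ t, d (xs t) (ys t)) / n

/-- Shannon entropy (in bits). -/
def ent {A : Type*} [Fintype A] (P : A → ℝ) : ℝ := -∑ a, P a * Real.logb 2 (P a)

/-- mutual information of a joint distribution on `A × B` (in bits). -/
def mutInf {A B : Type*} [Fintype A] [Fintype B] (J : A × B → ℝ) : ℝ :=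
  ent (fun a => ∑ b, J (a, b)) + ent (fun b => ∑ a, J (a, b)) - ent J

section WZ

variable {X Y Xh : Type*} [Fintype X] [Fintype Y] [Fintype Xh] [DecidableEq Y]

/-- expected per-letter side-information distortion `e(P,W)` of channel `W`. -/
def eDist (P : X → ℝ) (e : X → Y → ℝ) (W : X → Y → ℝ) : ℝ :=
  ∑ x, ∑ y, P x * W x y * e x y

/-- the class `𝒲₁(E)` of single-letter channels. -/
def W1 (P : X → ℝ) (e : X → Y → ℝ) (E : ℝ) : Set (X → Y → ℝ) :=
  {W | IsChannel W ∧ eDist P e W ≤ E}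

/-- `d(V,W)`: expected reproduction distortion for a test channel `V` whose output
alphabet `𝒰` is the set of functions from `Y` to `Xh`. -/
def dVW (P : X → ℝ) (d : X → Xh → ℝ) (V : X → (Y → Xh) → ℝ) (W : X → Y → ℝ) : ℝ :=
  ∑ u : Y → Xh, ∑ x, ∑ y, P x * V x u * W x y * d x (u y)

/-- `φ(V,W) = I(U;X) − I(U;Y)` under the joint law `P_X(x)V(u|x)W(y|x)`. -/
def phi (P : X → ℝ) (V : X → (Y → Xh) → ℝ) (W : X → Y → ℝ) : ℝ :=
  mutInf (fun p : (Y → Xh) × X => P p.2 * V p.2 p.1) -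
    mutInf (fun p : (Y → Xh) × Y => ∑ x, P x * V x p.1 * W x p.2)

/-- `𝒱(W,D)`. -/
def Vset (P : X → ℝ) (d : X → Xh → ℝ) (W : X → Y → ℝ) (D : ℝ) :
    Set (X → (Y → Xh) → ℝ) :=
  {V | IsChannel V ∧ dVW P d V W ≤ D}

/-- `𝒱(E,D)`. -/
def Vrob (P : X → ℝ) (e : X → Y → ℝ) (d : X → Xh → ℝ) (E D : ℝ) :
    Set (X → (Y → Xh) → ℝ) :=
  {V | IsChannel V ∧ ∀ W ∈ W1 P e E, dVW P d V W ≤ D}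

/-- the Wyner–Ziv rate-distortion function `R_WZ(D|W)`. -/
def RWZ (P : X → ℝ) (d : X → Xh → ℝ) (D : ℝ) (W : X → Y → ℝ) : ℝ :=
  sInf ((fun V => phi P V W) '' Vset P d W D)

/-- the pseudo rate-distortion function `R̃_WZ(D|W,E)`. -/
def RWZt (P : X → ℝ) (e : X → Y → ℝ) (d : X → Xh → ℝ) (D E : ℝ) (W : X → Y → ℝ) : ℝ :=
  sInf ((fun V => phi P V W) '' Vrob P e d E D)

end WZ

/-- a (possibly stochastic) Wyner–Ziv code of blocklength `n`:
a stochastic encoder `enc : 𝒳ⁿ → ℳ` and a decoder `dec : ℳ × 𝒴ⁿ → 𝒳̂ⁿ`. -/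
structure Code (X Y Xh : Type*) [Fintype X] (n : ℕ) where
  M : ℕ
  Mpos : 0 < M
  enc : (Fin n → X) → Fin M → ℝ
  enc_channel : IsChannel enc
  dec : Fin M → (Fin n → Y) → Fin n → Xh

section Codes

variable {X Y Xh : Type*} [Fintype X] [Fintype Y] [Fintype Xh]

/-- expected reproduction distortion of a code over the channel `Wn`. -/
def Code.expDist {n : ℕ} (C : Code X Y Xh n) (P : X → ℝ) (d : X → Xh → ℝ)
    (Wn : (Fin n → X) → (Fin n → Y) → ℝ) : ℝ :=
  ∑ xs, ∑ ys, ∑ m, iid P n xs * Wn xs ys * C.enc xs m * dseq d n xs (C.dec m ys)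

/-- probability that the reproduction distortion of a code exceeds `D`, over channel `Wn`. -/
def Code.excessProb {n : ℕ} (C : Code X Y Xh n) (P : X → ℝ) (d : X → Xh → ℝ)
    (Wn : (Fin n → X) → (Fin n → Y) → ℝ) (D : ℝ) : ℝ :=
  ∑ xs, ∑ ys, ∑ m, iid P n xs * Wn xs ys * C.enc xs m * ind (D < dseq d n xs (C.dec m ys))

/-- a sequence of channels from `X`-sequences to `Y`-sequences. -/
abbrev ChannelSeq (X Y : Type*) := ∀ n : ℕ, (Fin n → X) → (Fin n → Y) → ℝ

/-- probability that the side-information distortion exceeds `E`. -/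
def excessSideProb (P : X → ℝ) (e : X → Y → ℝ) {n : ℕ}
    (Wn : (Fin n → X) → (Fin n → Y) → ℝ) (E : ℝ) : ℝ :=
  ∑ xs, ∑ ys, iid P n xs * Wn xs ys * ind (E < dseq e n xs ys)

/-- expected side-information distortion at blocklength `n`. -/
def avgSideDist (P : X → ℝ) (e : X → Y → ℝ) {n : ℕ}
    (Wn : (Fin n → X) → (Fin n → Y) → ℝ) : ℝ :=
  ∑ xs, ∑ ys, iid P n xs * Wn xs ys * dseq e n xs ys

/-- the maximum distortion constrained class `𝒲_m(E)`. -/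
def MaxClass (P : X → ℝ) (e : X → Y → ℝ) (E : ℝ) : Set (ChannelSeq X Y) :=
  {Wseq | (∀ n, IsChannel (Wseq n)) ∧
    ∀ δ > (0:ℝ), ∃ n0 : ℕ, ∀ n ≥ n0, excessSideProb P e (Wseq n) E ≤ δ}

/-- the average distortion constrained class `𝒲_a(E)`. -/
def AvgClass (P : X → ℝ) (e : X → Y → ℝ) (E : ℝ) : Set (ChannelSeq X Y) :=
  {Wseq | (∀ n, IsChannel (Wseq n)) ∧ ∀ n, 1 ≤ n → avgSideDist P e (Wseq n) ≤ E}

/-- `R` is an achievable rate at distortion level `D`, universally for the class `WC`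
of channel sequences. -/
def Achievable (P : X → ℝ) (d : X → Xh → ℝ) (WC : Set (ChannelSeq X Y)) (D R : ℝ) : Prop :=
  ∀ ε > (0:ℝ), ∃ n0 : ℕ, ∃ C : ∀ n, Code X Y Xh n, ∀ n ≥ n0,
    Real.logb 2 ((C n).M : ℝ) / (n : ℝ) ≤ R + ε ∧
    ∀ Wseq ∈ WC, (C n).expDist P d (Wseq n) ≤ D + ε

/-- the rate-distortion function `R_m(D|E)` of the maximum distortion constrained class. -/
def Rm (P : X → ℝ) (e : X → Y → ℝ) (d : X → Xh → ℝ) (D E : ℝ) : ℝ :=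
  sInf {R | Achievable P d (MaxClass P e E) D R}

/-- the rate-distortion function `R_a(D|E)` of the average distortion constrained class. -/
def Ra (P : X → ℝ) (e : X → Y → ℝ) (d : X → Xh → ℝ) (D E : ℝ) : ℝ :=
  sInf {R | Achievable P d (AvgClass P e E) D R}

end Codes

/-- a Heegard–Berger code: one encoder and two decoders. -/
structure HBCode (X Y Xh : Type*) (n : ℕ) where
  M : ℕ
  Mpos : 0 < M
  enc : (Fin n → X) → Fin M
  dec1 : Fin M → (Fin n → Y) → Fin n → Xh
  dec2 : Fin M → (Fin n → Y) → Fin n → Xh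

section HB

variable {X Y Xh : Type*} [Fintype X] [Fintype Y] [Fintype Xh]

/-- expected distortion of one branch of a Heegard–Berger code over the memoryless
extension of the single-letter channel `W`. -/
def hbExpDist {n M : ℕ} (P : X → ℝ) (d : X → Xh → ℝ) (W : X → Y → ℝ)
    (enc : (Fin n → X) → Fin M) (dec : Fin M → (Fin n → Y) → Fin n → Xh) : ℝ :=
  ∑ xs, ∑ ys, iid P n xs * memoryless W n xs ys * dseq d n xs (dec (enc xs) ys)

/-- achievability for the Heegard–Berger problem with side-information channels `W₁, W₂`. -/
def HBAchievable (P : X → ℝ) (d : X → Xh → ℝ) (W₁ W₂ : X → Y → ℝ) (D₁ D₂ R : ℝ) : Prop :=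
  ∀ ε > (0:ℝ), ∃ n0 : ℕ, ∃ C : ∀ n, HBCode X Y Xh n, ∀ n ≥ n0,
    Real.logb 2 ((C n).M : ℝ) / (n : ℝ) ≤ R + ε ∧
    hbExpDist P d W₁ (C n).enc (C n).dec1 ≤ D₁ + ε ∧
    hbExpDist P d W₂ (C n).enc (C n).dec2 ≤ D₂ + ε

/-- the Heegard–Berger rate-distortion function `R_HB(D₁,D₂|W₁,W₂)`. -/
def RHB (P : X → ℝ) (d : X → Xh → ℝ) (W₁ W₂ : X → Y → ℝ) (D₁ D₂ : ℝ) : ℝ :=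
  sInf {R | HBAchievable P d W₁ W₂ D₁ D₂ R}

end HB

/-- the classical (no side-information) rate-distortion function `R(D)`. -/
def RD {X Xh : Type*} [Fintype X] [Fintype Xh] (P : X → ℝ) (d : X → Xh → ℝ) (D : ℝ) : ℝ :=
  sInf ((fun Q : X → Xh → ℝ => mutInf fun p : X × Xh => P p.1 * Q p.1 p.2) ''
    {Q | IsChannel Q ∧ (∑ x, ∑ xh, P x * Q x xh * d x xh) ≤ D})

section Types

variable {X Y : Type*} [Fintype X] [Fintype Y] [DecidableEq X] [DecidableEq Y]

/-- the empirical distribution (type) `P_{x^n}` of a sequence. -/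
def empDist {n : ℕ} (xs : Fin n → X) (a : X) : ℝ :=
  ((Finset.univ.filter fun t => xs t = a).card : ℝ) / n

/-- the joint empirical distribution (joint type) of a pair of sequences. -/
def empJoint {n : ℕ} (xs : Fin n → X) (ys : Fin n → Y) (p : X × Y) : ℝ :=
  ((Finset.univ.filter fun t => xs t = p.1 ∧ ys t = p.2).card : ℝ) / n

/-- `x^n` is `P`-typical with constant `δ`. -/
def isTypical {n : ℕ} (P : X → ℝ) (δ : ℝ) (xs : Fin n → X) : Prop :=
  (∀ a, |empDist xs a - P a| ≤ δ) ∧ ∀ t, P (xs t) ≠ 0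

/-- `y^n` lies in the `W`-shell `T_W(x^n)` of `x^n`. -/
def inShell {n : ℕ} (xs : Fin n → X) (ys : Fin n → Y) (W : X → Y → ℝ) : Prop :=
  ∀ a b, empJoint xs ys (a, b) = empDist xs a * W a b

/-- cardinality of the `W`-shell of `x^n`. -/
def shellCard {n : ℕ} (xs : Fin n → X) (W : X → Y → ℝ) : ℕ :=
  Set.ncard {ys : Fin n → Y | inShell xs ys W}

end Types

/-- `W` is a conditional type with denominator `n` (all entries are multiples of `1/n`). -/
def isCondType {X Y : Type*} (n : ℕ) (W : X → Y → ℝ) : Prop :=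
  ∀ x y, ∃ k : ℕ, W x y = (k : ℝ) / n

section Perm

variable {X Y Xh : Type*} [Fintype X] [Fintype Y] [Fintype Xh]

/-- probability, under the permuted source/side-information pair, that the reproduction
distortion of the code `C` exceeds `D`. -/
def permExcess {n : ℕ} (Pxy : (Fin n → X) × (Fin n → Y) → ℝ) (C : Code X Y Xh n)
    (d : X → Xh → ℝ) (D : ℝ) (π : Equiv.Perm (Fin n)) : ℝ :=
  ∑ p : (Fin n → X) × (Fin n → Y), ∑ m,
    Pxy p * C.enc (p.1 ∘ π) m * ind (D < dseq d n (p.1 ∘ π) (C.dec m (p.2 ∘ π)))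

end Perm

/-- the uniform distribution on `{0,1}`. -/
def unifBool : Bool → ℝ := fun _ => 1 / 2

/-- the Hamming distortion on `{0,1}`. -/
def hamBool : Bool → Bool → ℝ := fun a b => if a = b then 0 else 1

/-- the binary symmetric channel with crossover probability `p`. -/
def BSC (p : ℝ) : Bool → Bool → ℝ := fun x y => if x = y then 1 - p else p



/-! ## Auxiliary development for Statement 12 -/

/-! ### basic helpers -/

lemma log2_pos : (0:ℝ) < Real.log 2 := Real.log_pos (by norm_num)

lemma gibbs {ι : Type*} [Fintype ι] (p q : ι → ℝ) (hp : ∀ i, 0 ≤ p i)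
    (hq : ∀ i, 0 ≤ q i) (hpq : ∀ i, p i ≠ 0 → q i ≠ 0)
    (hq1 : ∑ i, q i ≤ 1) (hp1 : ∑ i, p i = 1) :
    ∑ i, p i * Real.logb 2 (q i) ≤ ∑ i, p i * Real.logb 2 (p i) := by
  have hlog2 := log2_pos
  have key : ∀ i, p i * Real.logb 2 (q i) - p i * Real.logb 2 (p i) ≤ (q i - p i) / Real.log 2 := by
    intro i
    rcases eq_or_lt_of_le (hp i) with h0 | h0
    · rw [← h0]
      simp only [zero_mul, sub_zero, zero_sub, neg_zero]
      exact div_nonneg (by linarith [hq i]) hlog2.le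
    · have hqi : 0 < q i := lt_of_le_of_ne (hq i) (Ne.symm (hpq i (ne_of_gt h0)))
      have hls : Real.log (q i / p i) ≤ q i / p i - 1 := Real.log_le_sub_one_of_pos (by positivity)
      have hrw : p i * Real.logb 2 (q i) - p i * Real.logb 2 (p i)
          = p i * Real.log (q i / p i) / Real.log 2 := by
        rw [Real.log_div (ne_of_gt hqi) (ne_of_gt h0)]
        simp only [Real.logb]
        ring
      rw [hrw, div_le_div_iff_of_pos_right hlog2]
      calc p i * Real.log (q i / p i) ≤ p i * (q i / p i - 1) :=
            mul_le_mul_of_nonneg_left hls (le_of_lt h0)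
        _ = q i - p i := by field_simp
  have hsum := Finset.sum_le_sum (fun i (_ : i ∈ Finset.univ) => key i)
  have h2 : ∑ i, (q i - p i) / Real.log 2 ≤ 0 := by
    rw [← Finset.sum_div, Finset.sum_sub_distrib, hp1]
    apply div_nonpos_of_nonpos_of_nonneg <;> linarith
  rw [Finset.sum_sub_distrib] at hsum
  linarith

lemma coef_logb_mul (c x y : ℝ) (h : c ≠ 0 → x ≠ 0 ∧ y ≠ 0) :
    c * Real.logb 2 (x * y) = c * Real.logb 2 x + c * Real.logb 2 y := by
  by_cases hc : c = 0
  · simp [hc]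
  · rw [Real.logb_mul (h hc).1 (h hc).2]; ring

lemma coef_logb_div (c x y : ℝ) (h : c ≠ 0 → x ≠ 0 ∧ y ≠ 0) :
    c * Real.logb 2 (x / y) = c * Real.logb 2 x - c * Real.logb 2 y := by
  by_cases hc : c = 0
  · simp [hc]
  · rw [Real.logb_div (h hc).1 (h hc).2]; ring

lemma neg_mul_logb_nonneg {p : ℝ} (h0 : 0 ≤ p) (h1 : p ≤ 1) :
    0 ≤ -(p * Real.logb 2 p) := by
  have := Real.logb_nonpos (b := 2) (by norm_num) h0 h1
  nlinarith

lemma neg_mul_logb_le_two {p : ℝ} (h0 : 0 ≤ p) (h1 : p ≤ 1) :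
    -(p * Real.logb 2 p) ≤ 2 := by
  rcases eq_or_lt_of_le h0 with h | h
  · simp [← h]
  · have hinv : Real.log (1 / p) ≤ 1 / p - 1 := Real.log_le_sub_one_of_pos (by positivity)
    have h1p : Real.log (1/p) = - Real.log p := by
      rw [one_div, Real.log_inv]
    have hle : -(p * Real.log p) ≤ 1 - p := by
      rw [h1p] at hinv
      have := mul_le_mul_of_nonneg_left hinv h0
      calc -(p * Real.log p) = p * -Real.log p := by ring
        _ ≤ p * (1/p - 1) := by nlinarith
        _ = 1 - p := by field_simp
    have hl2 : (1/2 : ℝ) ≤ Real.log 2 := by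
      have := Real.log_two_gt_d9
      linarith
    have : -(p * Real.logb 2 p) = -(p * Real.log p) / Real.log 2 := by
      simp only [Real.logb]; ring
    rw [this]
    rw [div_le_iff₀ log2_pos]
    nlinarith

lemma ent_nonneg {A : Type*} [Fintype A] {J : A → ℝ} (h0 : ∀ a, 0 ≤ J a)
    (h1 : ∀ a, J a ≤ 1) : 0 ≤ ent J := by
  rw [ent, ← Finset.sum_neg_distrib]
  exact Finset.sum_nonneg fun a _ => neg_mul_logb_nonneg (h0 a) (h1 a)

lemma ent_le {A : Type*} [Fintype A] {J : A → ℝ} (h0 : ∀ a, 0 ≤ J a)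
    (h1 : ∀ a, J a ≤ 1) : ent J ≤ 2 * Fintype.card A := by
  rw [ent, ← Finset.sum_neg_distrib]
  calc ∑ a, -(J a * Real.logb 2 (J a)) ≤ ∑ _a : A, (2:ℝ) :=
        Finset.sum_le_sum fun a _ => neg_mul_logb_le_two (h0 a) (h1 a)
    _ = 2 * Fintype.card A := by rw [Finset.sum_const]; simp [mul_comm]

lemma entry_le_one {A : Type*} [Fintype A] {J : A → ℝ} (h0 : ∀ a, 0 ≤ J a)
    (h1 : ∑ a, J a = 1) : ∀ a, J a ≤ 1 := by
  intro a
  rw [← h1]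
  exact Finset.single_le_sum (fun b _ => h0 b) (Finset.mem_univ a)

section Joints
variable {X Y Xh : Type*} [Fintype X] [Fintype Y] [Fintype Xh] [DecidableEq Y] [DecidableEq Xh]

def JUX (P : X → ℝ) (V : X → (Y → Xh) → ℝ) : (Y → Xh) × X → ℝ := fun p => P p.2 * V p.2 p.1
def JUY (P : X → ℝ) (V : X → (Y → Xh) → ℝ) (W : X → Y → ℝ) : (Y → Xh) × Y → ℝ :=
  fun p => ∑ x, P x * V x p.1 * W x p.2
def JXY (P : X → ℝ) (W : X → Y → ℝ) : X × Y → ℝ := fun p => P p.1 * W p.1 p.2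
def PYm (P : X → ℝ) (W : X → Y → ℝ) : Y → ℝ := fun y => ∑ x, P x * W x y
def TT (P : X → ℝ) (V : X → (Y → Xh) → ℝ) (W : X → Y → ℝ) : (Y → Xh) × X × Y → ℝ :=
  fun t => P t.2.1 * V t.2.1 t.1 * W t.2.1 t.2.2

variable {P : X → ℝ} {V : X → (Y → Xh) → ℝ} {W : X → Y → ℝ}

lemma phi_def : phi P V W = mutInf (JUX P V) - mutInf (JUY P V W) := rfl

/-- rearrangement of the total sum over the triple -/
lemma sum_T_rearr (g : (Y → Xh) → X → Y → ℝ) :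
    ∑ t : (Y → Xh) × X × Y, TT P V W t * g t.1 t.2.1 t.2.2
      = ∑ u, ∑ x, ∑ y, P x * V x u * W x y * g u x y := by
  rw [Fintype.sum_prod_type]
  refine Finset.sum_congr rfl fun u _ => ?_
  rw [Fintype.sum_prod_type]
  rfl

lemma sum_T_weight_uy (hW : IsChannel W) (g : (Y → Xh) → Y → ℝ) :
    ∑ t : (Y → Xh) × X × Y, TT P V W t * g t.1 t.2.2
      = ∑ p : (Y → Xh) × Y, JUY P V W p * g p.1 p.2 := by
  rw [sum_T_rearr (g := fun u _ y => g u y), Fintype.sum_prod_type]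
  refine Finset.sum_congr rfl fun u _ => ?_
  rw [Finset.sum_comm]
  refine Finset.sum_congr rfl fun y _ => ?_
  rw [JUY, ← Finset.sum_mul]

lemma sum_T_weight_ux (hW : IsChannel W) (g : (Y → Xh) → X → ℝ) :
    ∑ t : (Y → Xh) × X × Y, TT P V W t * g t.1 t.2.1
      = ∑ p : (Y → Xh) × X, JUX P V p * g p.1 p.2 := by
  rw [sum_T_rearr (g := fun u x _ => g u x), Fintype.sum_prod_type]
  refine Finset.sum_congr rfl fun u _ => Finset.sum_congr rfl fun x _ => ?_
  have : ∀ y, P x * V x u * W x y * g u x = (P x * V x u * g u x) * W x y := fun y => by ring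
  simp only [this]
  rw [← Finset.mul_sum, (hW x).2, mul_one, JUX]

lemma sum_T_weight_xy (hV : IsChannel V) (g : X → Y → ℝ) :
    ∑ t : (Y → Xh) × X × Y, TT P V W t * g t.2.1 t.2.2
      = ∑ p : X × Y, JXY P W p * g p.1 p.2 := by
  rw [sum_T_rearr (g := fun _ x y => g x y), Finset.sum_comm, Fintype.sum_prod_type]
  refine Finset.sum_congr rfl fun x _ => ?_
  rw [Finset.sum_comm]
  refine Finset.sum_congr rfl fun y _ => ?_
  have : ∀ u, P x * V x u * W x y * g x y = V x u * (P x * W x y * g x y) := fun u => by ring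
  simp only [this]
  rw [← Finset.sum_mul, (hV x).2, one_mul, JXY]

lemma sum_T_weight_x (hV : IsChannel V) (hW : IsChannel W) (g : X → ℝ) :
    ∑ t : (Y → Xh) × X × Y, TT P V W t * g t.2.1 = ∑ x, P x * g x := by
  rw [sum_T_weight_xy hV (g := fun x _ => g x), Fintype.sum_prod_type]
  refine Finset.sum_congr rfl fun x _ => ?_
  have : ∀ y, JXY P W (x, y) * g x = (P x * g x) * W x y := fun y => by simp [JXY]; ring
  simp only [this]
  rw [← Finset.mul_sum, (hW x).2, mul_one]

lemma sum_T_total (hV : IsChannel V) (hW : IsChannel W) (hP : ∑ x, P x = 1) :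
    ∑ t, TT P V W t = 1 := by
  have h := sum_T_weight_x (P := P) (V := V) (W := W) hV hW (g := fun _ => 1)
  simp only [mul_one] at h
  rw [h, hP]

lemma JUY_marg (u : Y → Xh) (y : Y) : ∑ x, TT P V W (u, x, y) = JUY P V W (u, y) := rfl

lemma sum_JUY_total (hV : IsChannel V) (hW : IsChannel W) (hP : ∑ x, P x = 1) :
    ∑ p : (Y → Xh) × Y, JUY P V W p = 1 := by
  have h := sum_T_weight_uy (P := P) (V := V) hW (g := fun _ _ => 1)
  simp only [mul_one] at h
  rw [← h, sum_T_total hV hW hP]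

lemma JUY_nonneg (hP : ∀ x, 0 ≤ P x) (hV : IsChannel V) (hW : IsChannel W) :
    ∀ p, 0 ≤ JUY P V W p := fun p =>
  Finset.sum_nonneg fun x _ => by
    have := (hV x).1 p.1; have := (hW x).1 p.2; have := hP x; positivity

lemma TT_nonneg (hP : ∀ x, 0 ≤ P x) (hV : IsChannel V) (hW : IsChannel W) :
    ∀ t, 0 ≤ TT P V W t := fun t => by
  have := (hV t.2.1).1 t.1; have := (hW t.2.1).1 t.2.2; have := hP t.2.1
  exact mul_nonneg (mul_nonneg (hP t.2.1) ‹0 ≤ V t.2.1 t.1›) ‹0 ≤ W t.2.1 t.2.2›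

lemma TT_le_JUY (hP : ∀ x, 0 ≤ P x) (hV : IsChannel V) (hW : IsChannel W) (t : (Y → Xh) × X × Y) :
    TT P V W t ≤ JUY P V W (t.1, t.2.2) := by
  have : TT P V W t = TT P V W (t.1, t.2.1, t.2.2) := rfl
  rw [this, ← JUY_marg]
  exact Finset.single_le_sum (fun x _ => TT_nonneg hP hV hW (t.1, x, t.2.2)) (Finset.mem_univ t.2.1)

/-- `phi` as a combination of joint entropies (marginal bookkeeping only). -/
lemma phi_eq' (hV : IsChannel V) (hW : IsChannel W) :
    phi P V W = ent P + ent (JUY P V W) - ent (JUX P V) - ent (PYm P W) := by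
  rw [phi_def, mutInf, mutInf]
  have h1 : (fun a => ∑ b, JUX P V (a, b)) = (fun a => ∑ b, JUY P V W (a, b)) := by
    funext u
    simp only [JUX, JUY]
    rw [Finset.sum_comm]
    refine Finset.sum_congr rfl fun x _ => ?_
    rw [← Finset.mul_sum, (hW x).2, mul_one, mul_comm]
  have h2 : (fun b => ∑ a, JUX P V (a, b)) = P := by
    funext x
    simp only [JUX]
    rw [← Finset.mul_sum, (hV x).2, mul_one]
  have h3 : (fun b => ∑ a, JUY P V W (a, b)) = PYm P W := by
    funext y
    simp only [JUY, PYm]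
    rw [Finset.sum_comm]
    refine Finset.sum_congr rfl fun x _ => ?_
    have : ∀ u, P x * V x u * W x y = V x u * (P x * W x y) := fun u => by ring
    simp only [this]
    rw [← Finset.sum_mul, (hV x).2, one_mul]
  rw [h1, h2, h3]
  ring

/-- splitting the entropy of the full joint. -/
lemma ent_TT (hP : ∀ x, 0 ≤ P x) (hV : IsChannel V) (hW : IsChannel W) :
    ent (TT P V W) = ent (JUX P V) + ent (JXY P W) - ent P := by
  have key : ∀ t : (Y → Xh) × X × Y,
      TT P V W t * Real.logb 2 (TT P V W t)
        = TT P V W t * Real.logb 2 (JUX P V (t.1, t.2.1))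
          + TT P V W t * Real.logb 2 (JXY P W (t.2.1, t.2.2))
          - TT P V W t * Real.logb 2 (P t.2.1) := by
    intro t
    by_cases h : TT P V W t = 0
    · simp [h]
    · obtain ⟨u, x, y⟩ := t
      have hP' : P x ≠ 0 := fun h' => h (by simp [TT, h'])
      have hV' : V x u ≠ 0 := fun h' => h (by simp [TT, h'])
      have hW' : W x y ≠ 0 := fun h' => h (by simp [TT, h'])
      have hJUX : JUX P V (u, x) ≠ 0 := mul_ne_zero hP' hV'
      have e1 : TT P V W (u, x, y) = JUX P V (u, x) * W x y := rfl
      rw [e1, Real.logb_mul hJUX hW']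
      have e2 : Real.logb 2 (W x y)
          = Real.logb 2 (JXY P W (x, y)) - Real.logb 2 (P x) := by
        have : JXY P W (x, y) = P x * W x y := rfl
        rw [this, Real.logb_mul hP' hW']; ring
      rw [e2]; ring
  simp only [ent]
  have hs : ∑ t, TT P V W t * Real.logb 2 (TT P V W t)
      = ∑ t : (Y → Xh) × X × Y, (TT P V W t * Real.logb 2 (JUX P V (t.1, t.2.1))
          + TT P V W t * Real.logb 2 (JXY P W (t.2.1, t.2.2))
          - TT P V W t * Real.logb 2 (P t.2.1)) := Finset.sum_congr rfl fun t _ => key t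
  rw [hs]
  rw [Finset.sum_sub_distrib, Finset.sum_add_distrib]
  rw [sum_T_weight_ux hW (g := fun u x => Real.logb 2 (JUX P V (u, x))),
    sum_T_weight_xy hV (g := fun x y => Real.logb 2 (JXY P W (x, y))),
    sum_T_weight_x hV hW (g := fun x => Real.logb 2 (P x))]
  ring

lemma phi_eq (hP : ∀ x, 0 ≤ P x) (hV : IsChannel V) (hW : IsChannel W) :
    phi P V W = ent (JUY P V W) + ent (JXY P W) - ent (PYm P W) - ent (TT P V W) := by
  rw [phi_eq' hV hW, ent_TT hP hV hW]
  ring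

end Joints

section Mix
variable {X Y Xh : Type*} [Fintype X] [Fintype Y] [Fintype Xh] [DecidableEq Y] [DecidableEq Xh]
variable {P : X → ℝ} {V₁ V₂ : X → (Y → Xh) → ℝ} {W : X → Y → ℝ}

lemma mix_channel (h1 : IsChannel V₁) (h2 : IsChannel V₂) :
    IsChannel (fun x u => (V₁ x u + V₂ x u) / 2) := by
  intro x
  constructor
  · intro u
    have := (h1 x).1 u; have := (h2 x).1 u
    positivity
  · rw [← Finset.sum_div, Finset.sum_add_distrib, (h1 x).2, (h2 x).2]
    norm_num

/-- Gibbs-style half of the convexity argument: the "conditional entropy difference"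
`ent TT - ent JUY` evaluated at channel `Vi` with cross terms at the mixture. -/
lemma mix_aux (hP : ∀ x, 0 ≤ P x) (hPt : ∑ x, P x = 1)
    (h1 : IsChannel V₁) (h2 : IsChannel V₂) (hW : IsChannel W)
    (hVi : IsChannel V₁) :
    True := trivial

lemma phi_mix (hP : ∀ x, 0 ≤ P x) (hPt : ∑ x, P x = 1)
    (h1 : IsChannel V₁) (h2 : IsChannel V₂) (hW : IsChannel W) :
    phi P (fun x u => (V₁ x u + V₂ x u) / 2) W ≤ (phi P V₁ W + phi P V₂ W) / 2 := by
  set Vb : X → (Y → Xh) → ℝ := fun x u => (V₁ x u + V₂ x u) / 2 with hVb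
  have hb : IsChannel Vb := mix_channel h1 h2
  -- pointwise relations
  have hTb : ∀ t, TT P Vb W t = (TT P V₁ W t + TT P V₂ W t) / 2 := by
    intro t; simp only [TT, hVb]; ring
  have hJb : ∀ p, JUY P Vb W p = (JUY P V₁ W p + JUY P V₂ W p) / 2 := by
    intro p
    have hx : ∀ x, P x * Vb x p.1 * W x p.2
        = (P x * V₁ x p.1 * W x p.2 + P x * V₂ x p.1 * W x p.2) / 2 := fun x => by
      simp only [hVb]; ring
    simp only [JUY]
    rw [Finset.sum_congr rfl fun x _ => hx x, ← Finset.sum_div, Finset.sum_add_distrib]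
  -- the key Gibbs estimate for each component
  have key : ∀ (V : X → (Y → Xh) → ℝ), IsChannel V →
      (∀ t, TT P V W t ≤ 2 * TT P Vb W t) →
      (∀ p, JUY P V W p ≤ 2 * JUY P Vb W p) →
      (∑ t : (Y → Xh) × X × Y, TT P V W t * Real.logb 2 (TT P Vb W t))
        - ent (JUY P V W)
        - (∑ t : (Y → Xh) × X × Y, TT P V W t * Real.logb 2 (JUY P Vb W (t.1, t.2.2)))
        ≤ - ent (TT P V W) := by
    intro V hV hTle hJle
    have hTn := TT_nonneg hP hV hW
    have hTbn := TT_nonneg hP hb hW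
    have hJn := JUY_nonneg hP hV hW
    have hJbn := JUY_nonneg hP hb hW
    set q : (Y → Xh) × X × Y → ℝ :=
      fun t => TT P Vb W t * JUY P V W (t.1, t.2.2) / JUY P Vb W (t.1, t.2.2) with hq
    have hqn : ∀ t, 0 ≤ q t := by
      intro t
      have := hTbn t; have := hJn (t.1, t.2.2); have := hJbn (t.1, t.2.2)
      positivity
    have hpq : ∀ t, TT P V W t ≠ 0 → q t ≠ 0 := by
      intro t ht
      have htpos : 0 < TT P V W t := lt_of_le_of_ne (hTn t) (Ne.symm ht)
      have hTbpos : 0 < TT P Vb W t := by have := hTle t; linarith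
      have hJpos : 0 < JUY P V W (t.1, t.2.2) :=
        lt_of_lt_of_le htpos (TT_le_JUY hP hV hW t)
      have hJbpos : 0 < JUY P Vb W (t.1, t.2.2) :=
        lt_of_lt_of_le hTbpos (TT_le_JUY hP hb hW t)
      have : 0 < q t := by rw [hq]; positivity
      exact ne_of_gt this
    have hq1 : ∑ t, q t ≤ 1 := by
      have hgrp : ∑ t, q t = ∑ u, ∑ y, ∑ x, q (u, x, y) := by
        rw [Fintype.sum_prod_type]
        refine Finset.sum_congr rfl fun u _ => ?_
        rw [Fintype.sum_prod_type, Finset.sum_comm]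
      rw [hgrp]
      have inner : ∀ u y, ∑ x, q (u, x, y) ≤ JUY P V W (u, y) := by
        intro u y
        by_cases hz : JUY P Vb W (u, y) = 0
        · have : ∀ x, q (u, x, y) = 0 := by
            intro x
            have hTz : TT P Vb W (u, x, y) = 0 := by
              have hle := TT_le_JUY hP hb hW (u, x, y)
              have := hTbn (u, x, y)
              simp only at hle
              rw [hz] at hle
              linarith
            simp [hq, hTz]
          rw [Finset.sum_eq_zero fun x _ => this x]
          exact hJn (u, y)
        · have hx : ∀ x, q (u, x, y)
              = TT P Vb W (u, x, y) * (JUY P V W (u, y) / JUY P Vb W (u, y)) := fun x => by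
            rw [hq]; ring
          rw [Finset.sum_congr rfl fun x _ => hx x, ← Finset.sum_mul, JUY_marg]
          have : JUY P Vb W (u, y) * (JUY P V W (u, y) / JUY P Vb W (u, y))
              = JUY P V W (u, y) := by field_simp
          rw [this]
      calc ∑ u, ∑ y, ∑ x, q (u, x, y) ≤ ∑ u, ∑ y, JUY P V W (u, y) :=
            Finset.sum_le_sum fun u _ => Finset.sum_le_sum fun y _ => inner u y
        _ = ∑ p : (Y → Xh) × Y, JUY P V W p := by rw [Fintype.sum_prod_type]
        _ = 1 := sum_JUY_total hV hW hPt
    have hgibbs := gibbs (TT P V W) q hTn hqn hpq hq1 (sum_T_total hV hW hPt)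
    -- split the logarithm of q
    have hsplit : ∀ t, TT P V W t * Real.logb 2 (q t)
        = TT P V W t * Real.logb 2 (TT P Vb W t)
          + TT P V W t * Real.logb 2 (JUY P V W (t.1, t.2.2))
          - TT P V W t * Real.logb 2 (JUY P Vb W (t.1, t.2.2)) := by
      intro t
      by_cases ht : TT P V W t = 0
      · simp [ht]
      · have htpos : 0 < TT P V W t := lt_of_le_of_ne (hTn t) (Ne.symm ht)
        have hTbpos : 0 < TT P Vb W t := by have := hTle t; linarith
        have hJpos : 0 < JUY P V W (t.1, t.2.2) :=
          lt_of_lt_of_le htpos (TT_le_JUY hP hV hW t)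
        have hJbpos : 0 < JUY P Vb W (t.1, t.2.2) :=
          lt_of_lt_of_le hTbpos (TT_le_JUY hP hb hW t)
        rw [hq]
        rw [Real.logb_div (by positivity) (ne_of_gt hJbpos),
          Real.logb_mul (ne_of_gt hTbpos) (ne_of_gt hJpos)]
        ring
    have hL : ∑ t, TT P V W t * Real.logb 2 (q t)
        = (∑ t : (Y → Xh) × X × Y, TT P V W t * Real.logb 2 (TT P Vb W t))
          + (∑ p : (Y → Xh) × Y, JUY P V W p * Real.logb 2 (JUY P V W p))
          - (∑ t : (Y → Xh) × X × Y, TT P V W t * Real.logb 2 (JUY P Vb W (t.1, t.2.2))) := by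
      rw [Finset.sum_congr rfl fun t _ => hsplit t, Finset.sum_sub_distrib,
        Finset.sum_add_distrib,
        sum_T_weight_uy hW (g := fun u y => Real.logb 2 (JUY P V W (u, y)))]
    rw [hL] at hgibbs
    have hR : ∑ t, TT P V W t * Real.logb 2 (TT P V W t) = - ent (TT P V W) := by
      rw [ent]; ring
    have hE : ∑ p : (Y → Xh) × Y, JUY P V W p * Real.logb 2 (JUY P V W p)
        = - ent (JUY P V W) := by rw [ent]; ring
    rw [hR, hE] at hgibbs
    linarith
  -- apply to both components
  have hle1 : ∀ t, TT P V₁ W t ≤ 2 * TT P Vb W t := by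
    intro t
    have := TT_nonneg hP h2 hW t
    rw [hTb t]; linarith
  have hle2 : ∀ t, TT P V₂ W t ≤ 2 * TT P Vb W t := by
    intro t
    have := TT_nonneg hP h1 hW t
    rw [hTb t]; linarith
  have hje1 : ∀ p, JUY P V₁ W p ≤ 2 * JUY P Vb W p := by
    intro p
    have := JUY_nonneg hP h2 hW p
    rw [hJb p]; linarith
  have hje2 : ∀ p, JUY P V₂ W p ≤ 2 * JUY P Vb W p := by
    intro p
    have := JUY_nonneg hP h1 hW p
    rw [hJb p]; linarith
  have k1 := key V₁ h1 hle1 hje1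
  have k2 := key V₂ h2 hle2 hje2
  -- average the two estimates
  have havgT : (∑ t : (Y → Xh) × X × Y, TT P V₁ W t * Real.logb 2 (TT P Vb W t))
      + (∑ t : (Y → Xh) × X × Y, TT P V₂ W t * Real.logb 2 (TT P Vb W t))
      = 2 * (- ent (TT P Vb W)) := by
    rw [← Finset.sum_add_distrib, ent, neg_neg, Finset.mul_sum]
    refine Finset.sum_congr rfl fun t _ => ?_
    rw [hTb t]; ring
  have havgJ : (∑ t : (Y → Xh) × X × Y, TT P V₁ W t * Real.logb 2 (JUY P Vb W (t.1, t.2.2)))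
      + (∑ t : (Y → Xh) × X × Y, TT P V₂ W t * Real.logb 2 (JUY P Vb W (t.1, t.2.2)))
      = 2 * (- ent (JUY P Vb W)) := by
    rw [sum_T_weight_uy hW (g := fun u y => Real.logb 2 (JUY P Vb W (u, y))),
      sum_T_weight_uy hW (g := fun u y => Real.logb 2 (JUY P Vb W (u, y))),
      ← Finset.sum_add_distrib, ent, neg_neg, Finset.mul_sum]
    refine Finset.sum_congr rfl fun p _ => ?_
    rw [hJb p]; ring
  -- conclude via phi_eq
  rw [phi_eq hP hb hW, phi_eq hP h1 hW, phi_eq hP h2 hW]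
  have hcond : ent (TT P Vb W) - ent (JUY P Vb W)
      ≥ ((ent (TT P V₁ W) - ent (JUY P V₁ W)) + (ent (TT P V₂ W) - ent (JUY P V₂ W))) / 2 := by
    linarith
  linarith

end Mix

/-! ### the four decoding functions on `Bool` -/

def uC (v : Bool) : Bool → Bool := fun _ => v
def uId : Bool → Bool := fun y => y
def uNot : Bool → Bool := fun y => !y

lemma sumU (g : (Bool → Bool) → ℝ) :
    ∑ u, g u = g (uC false) + g (uC true) + g uId + g uNot := by
  have h : (Finset.univ : Finset (Bool → Bool)) = {uC false, uC true, uId, uNot} := by decide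
  rw [h, Finset.sum_insert (by decide), Finset.sum_insert (by decide),
    Finset.sum_insert (by decide), Finset.sum_singleton]
  ring

lemma ucases (u : Bool → Bool) : u = uC false ∨ u = uC true ∨ u = uId ∨ u = uNot := by
  revert u; decide

/-! ### merging the `flip` decoder into the `identity` decoder -/

def fMer : (Bool → Bool) → (Bool → Bool) := fun u => if u = uNot then uId else u
def mer (V : Bool → (Bool → Bool) → ℝ) : Bool → (Bool → Bool) → ℝ :=
  fun x u => if u = uNot then 0 else if u = uId then V x uId + V x uNot else V x u

variable {V : Bool → (Bool → Bool) → ℝ} {W : Bool → Bool → ℝ} {P : Bool → ℝ}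

lemma mer_uNot (x : Bool) : mer V x uNot = 0 := by
  unfold mer; rw [if_pos rfl]

lemma mer_uId (x : Bool) : mer V x uId = V x uId + V x uNot := by
  unfold mer; rw [if_neg (by decide : ¬(uId = uNot)), if_pos rfl]

lemma mer_uC (v x : Bool) : mer V x (uC v) = V x (uC v) := by
  cases v <;> (unfold mer; rw [if_neg (by decide), if_neg (by decide)])

lemma fMer_uNot : fMer uNot = uId := by unfold fMer; rw [if_pos rfl]
lemma fMer_uId : fMer uId = uId := by unfold fMer; rw [if_neg (by decide)]
lemma fMer_uC (v : Bool) : fMer (uC v) = uC v := by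
  cases v <;> (unfold fMer; rw [if_neg (by decide)])

lemma mer_sum (x : Bool) (F : (Bool → Bool) → ℝ) :
    ∑ u, mer V x u * F u = ∑ u, V x u * F (fMer u) := by
  rw [sumU, sumU, mer_uNot, mer_uId, mer_uC, mer_uC, fMer_uNot, fMer_uId, fMer_uC, fMer_uC]
  ring

lemma mer_channel (hV : IsChannel V) : IsChannel (mer V) := by
  intro x
  constructor
  · intro u
    rcases ucases u with h | h | h | h <;> subst h
    · rw [mer_uC]; exact (hV x).1 _
    · rw [mer_uC]; exact (hV x).1 _
    · rw [mer_uId]; have := (hV x).1 uId; have := (hV x).1 uNot; linarith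
    · rw [mer_uNot]
  · have h := (hV x).2
    rw [sumU] at h ⊢
    rw [mer_uNot, mer_uId, mer_uC, mer_uC]
    linarith

lemma V_le_mer (hV : IsChannel V) (x : Bool) (u : Bool → Bool) :
    V x u ≤ mer V x (fMer u) := by
  rcases ucases u with h | h | h | h <;> subst h
  · rw [fMer_uC, mer_uC]
  · rw [fMer_uC, mer_uC]
  · rw [fMer_uId, mer_uId]; have := (hV x).1 uNot; linarith
  · rw [fMer_uNot, mer_uId]; have := (hV x).1 uId; linarith

lemma TT_le_mer (hP : ∀ x, 0 ≤ P x) (hV : IsChannel V) (hW : IsChannel W)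
    (t : (Bool → Bool) × Bool × Bool) :
    TT P V W t ≤ TT P (mer V) W (fMer t.1, t.2.1, t.2.2) := by
  obtain ⟨u, x, y⟩ := t
  simp only [TT]
  exact mul_le_mul_of_nonneg_right (mul_le_mul_of_nonneg_left (V_le_mer hV x u) (hP x)) ((hW x).1 y)

lemma JUY_le_mer (hP : ∀ x, 0 ≤ P x) (hV : IsChannel V) (hW : IsChannel W)
    (u : Bool → Bool) (y : Bool) :
    JUY P V W (u, y) ≤ JUY P (mer V) W (fMer u, y) := by
  simp only [JUY]
  refine Finset.sum_le_sum fun x _ => ?_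
  exact mul_le_mul_of_nonneg_right (mul_le_mul_of_nonneg_left (V_le_mer hV x u) (hP x)) ((hW x).1 y)

lemma sum_T_compose (c : (Bool → Bool) → Bool → Bool → ℝ) :
    ∑ t : (Bool → Bool) × Bool × Bool, TT P V W t * c (fMer t.1) t.2.1 t.2.2
      = ∑ t : (Bool → Bool) × Bool × Bool, TT P (mer V) W t * c t.1 t.2.1 t.2.2 := by
  rw [sum_T_rearr (g := fun u x y => c (fMer u) x y), sum_T_rearr (g := fun u x y => c u x y)]
  rw [Finset.sum_comm]
  conv_rhs => rw [Finset.sum_comm]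
  refine Finset.sum_congr rfl fun x _ => ?_
  rw [Finset.sum_comm]
  conv_rhs => rw [Finset.sum_comm]
  refine Finset.sum_congr rfl fun y _ => ?_
  have := mer_sum (V := V) x (F := fun u => P x * W x y * c u x y)
  calc ∑ u, P x * V x u * W x y * c (fMer u) x y
      = ∑ u, V x u * (P x * W x y * c (fMer u) x y) :=
        Finset.sum_congr rfl fun u _ => by ring
    _ = ∑ u, mer V x u * (P x * W x y * c u x y) := this.symm
    _ = ∑ u, P x * mer V x u * W x y * c u x y :=
        Finset.sum_congr rfl fun u _ => by ring

/-- merging the flip decoder into the identity decoder does not increase `phi`. -/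
lemma phi_mer (hP : ∀ x, 0 ≤ P x) (hPt : ∑ x, P x = 1)
    (hV : IsChannel V) (hW : IsChannel W) :
    phi P (mer V) W ≤ phi P V W := by
  have hm : IsChannel (mer V) := mer_channel hV
  have hTn := TT_nonneg hP hV hW
  have hTmn := TT_nonneg hP hm hW
  have hJn := JUY_nonneg hP hV hW
  have hJmn := JUY_nonneg hP hm hW
  set q : (Bool → Bool) × Bool × Bool → ℝ :=
    fun t => TT P (mer V) W (fMer t.1, t.2.1, t.2.2) * JUY P V W (t.1, t.2.2)
      / JUY P (mer V) W (fMer t.1, t.2.2) with hq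
  have hqn : ∀ t, 0 ≤ q t := by
    intro t
    have := hTmn (fMer t.1, t.2.1, t.2.2); have := hJn (t.1, t.2.2)
    have := hJmn (fMer t.1, t.2.2)
    positivity
  have hpq : ∀ t, TT P V W t ≠ 0 → q t ≠ 0 := by
    intro t ht
    have htpos : 0 < TT P V W t := lt_of_le_of_ne (hTn t) (Ne.symm ht)
    have hTm : 0 < TT P (mer V) W (fMer t.1, t.2.1, t.2.2) :=
      lt_of_lt_of_le htpos (TT_le_mer hP hV hW t)
    have hJ : 0 < JUY P V W (t.1, t.2.2) := lt_of_lt_of_le htpos (TT_le_JUY hP hV hW t)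
    have hJm : 0 < JUY P (mer V) W (fMer t.1, t.2.2) :=
      lt_of_lt_of_le hTm (TT_le_JUY hP hm hW (fMer t.1, t.2.1, t.2.2))
    have : 0 < q t := by rw [hq]; positivity
    exact ne_of_gt this
  have hq1 : ∑ t, q t ≤ 1 := by
    have hgrp : ∑ t, q t = ∑ u, ∑ y, ∑ x, q (u, x, y) := by
      rw [Fintype.sum_prod_type]
      refine Finset.sum_congr rfl fun u _ => ?_
      rw [Fintype.sum_prod_type, Finset.sum_comm]
    rw [hgrp]
    have inner : ∀ u y, ∑ x, q (u, x, y) ≤ JUY P V W (u, y) := by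
      intro u y
      by_cases hz : JUY P (mer V) W (fMer u, y) = 0
      · have hx : ∀ x, q (u, x, y) = 0 := by
          intro x
          have hTz : TT P (mer V) W (fMer u, x, y) = 0 := by
            have hle := TT_le_JUY hP hm hW (fMer u, x, y)
            have := hTmn (fMer u, x, y)
            simp only at hle
            rw [hz] at hle
            linarith
          simp [hq, hTz]
        rw [Finset.sum_eq_zero fun x _ => hx x]
        exact hJn (u, y)
      · have hx : ∀ x, q (u, x, y)
            = TT P (mer V) W (fMer u, x, y)
              * (JUY P V W (u, y) / JUY P (mer V) W (fMer u, y)) := fun x => by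
          rw [hq]; ring
        rw [Finset.sum_congr rfl fun x _ => hx x, ← Finset.sum_mul, JUY_marg]
        have : JUY P (mer V) W (fMer u, y) * (JUY P V W (u, y) / JUY P (mer V) W (fMer u, y))
            = JUY P V W (u, y) := by field_simp
        rw [this]
    calc ∑ u, ∑ y, ∑ x, q (u, x, y) ≤ ∑ u, ∑ y, JUY P V W (u, y) :=
          Finset.sum_le_sum fun u _ => Finset.sum_le_sum fun y _ => inner u y
      _ = ∑ p : (Bool → Bool) × Bool, JUY P V W p := by rw [Fintype.sum_prod_type]
      _ = 1 := sum_JUY_total hV hW hPt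
  have hgibbs := gibbs (TT P V W) q hTn hqn hpq hq1 (sum_T_total hV hW hPt)
  have hsplit : ∀ t, TT P V W t * Real.logb 2 (q t)
      = TT P V W t * Real.logb 2 (TT P (mer V) W (fMer t.1, t.2.1, t.2.2))
        + TT P V W t * Real.logb 2 (JUY P V W (t.1, t.2.2))
        - TT P V W t * Real.logb 2 (JUY P (mer V) W (fMer t.1, t.2.2)) := by
    intro t
    by_cases ht : TT P V W t = 0
    · simp [ht]
    · have htpos : 0 < TT P V W t := lt_of_le_of_ne (hTn t) (Ne.symm ht)
      have hTm : 0 < TT P (mer V) W (fMer t.1, t.2.1, t.2.2) :=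
        lt_of_lt_of_le htpos (TT_le_mer hP hV hW t)
      have hJ : 0 < JUY P V W (t.1, t.2.2) := lt_of_lt_of_le htpos (TT_le_JUY hP hV hW t)
      have hJm : 0 < JUY P (mer V) W (fMer t.1, t.2.2) :=
        lt_of_lt_of_le hTm (TT_le_JUY hP hm hW (fMer t.1, t.2.1, t.2.2))
      rw [hq]
      rw [Real.logb_div (by positivity) (ne_of_gt hJm),
        Real.logb_mul (ne_of_gt hTm) (ne_of_gt hJ)]
      ring
  have hS1 : ∑ t : (Bool → Bool) × Bool × Bool,
      TT P V W t * Real.logb 2 (TT P (mer V) W (fMer t.1, t.2.1, t.2.2))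
      = - ent (TT P (mer V) W) := by
    rw [sum_T_compose (c := fun u x y => Real.logb 2 (TT P (mer V) W (u, x, y))), ent, neg_neg]
  have hS2 : ∑ t : (Bool → Bool) × Bool × Bool,
      TT P V W t * Real.logb 2 (JUY P V W (t.1, t.2.2)) = - ent (JUY P V W) := by
    rw [sum_T_weight_uy hW (g := fun u y => Real.logb 2 (JUY P V W (u, y))), ent, neg_neg]
  have hS3 : ∑ t : (Bool → Bool) × Bool × Bool,
      TT P V W t * Real.logb 2 (JUY P (mer V) W (fMer t.1, t.2.2)) = - ent (JUY P (mer V) W) := by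
    rw [sum_T_compose (c := fun u _ y => Real.logb 2 (JUY P (mer V) W (u, y)))]
    rw [sum_T_weight_uy hW (g := fun u y => Real.logb 2 (JUY P (mer V) W (u, y))), ent, neg_neg]
  have hLHS : ∑ t, TT P V W t * Real.logb 2 (q t)
      = - ent (TT P (mer V) W) - ent (JUY P V W) + ent (JUY P (mer V) W) := by
    rw [Finset.sum_congr rfl fun t _ => hsplit t, Finset.sum_sub_distrib, Finset.sum_add_distrib,
      hS1, hS2, hS3]
    ring
  have hRHS : ∑ t, TT P V W t * Real.logb 2 (TT P V W t) = - ent (TT P V W) := by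
    rw [ent, neg_neg]
  rw [hLHS, hRHS] at hgibbs
  rw [phi_eq hP hm hW, phi_eq hP hV hW]
  linarith

/-! ### relabeling symmetry -/

def sg : (Bool → Bool) → Bool → Bool := fun u y => !(u (!y))

def Vs (V : Bool → (Bool → Bool) → ℝ) : Bool → (Bool → Bool) → ℝ :=
  fun x u => V (!x) (sg u)

lemma sg_invol : ∀ u, sg (sg u) = u := by decide

def eU : Equiv.Perm (Bool → Bool) := ⟨sg, sg, sg_invol, sg_invol⟩
def eB : Equiv.Perm Bool := ⟨Bool.not, Bool.not, Bool.not_not, Bool.not_not⟩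

@[simp] lemma eU_apply (u : Bool → Bool) : eU u = sg u := rfl
@[simp] lemma eB_apply (y : Bool) : eB y = !y := rfl

lemma ent_comp_equiv {A A' : Type*} [Fintype A] [Fintype A'] (e : A' ≃ A) (f : A → ℝ) :
    ent (fun a' => f (e a')) = ent f := by
  rw [ent, ent, Equiv.sum_comp e (fun a => f a * Real.logb 2 (f a))]

lemma ent_relabel {A A' : Type*} [Fintype A] [Fintype A'] (e : A' ≃ A) (f : A' → ℝ)
    (g : A → ℝ) (h : ∀ a', f a' = g (e a')) : ent f = ent g := by
  rw [ent, ent]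
  exact congrArg Neg.neg (Fintype.sum_equiv e _ _ fun a' => by rw [h])

lemma mutInf_relabel {A B A' B' : Type*} [Fintype A] [Fintype B] [Fintype A'] [Fintype B']
    (e1 : A' ≃ A) (e2 : B' ≃ B) (J : A × B → ℝ) :
    mutInf (fun p : A' × B' => J (e1 p.1, e2 p.2)) = mutInf J := by
  have ha : ent (fun a' : A' => ∑ b', J (e1 a', e2 b')) = ent (fun a : A => ∑ b, J (a, b)) :=
    ent_relabel e1 _ _ fun a' => (Equiv.sum_comp e2 (fun b => J (e1 a', b))).symm ▸
      (Equiv.sum_comp e2 (fun b => J (e1 a', b)))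
  have hb : ent (fun b' : B' => ∑ a', J (e1 a', e2 b')) = ent (fun b : B => ∑ a, J (a, b)) :=
    ent_relabel e2 _ _ fun b' => Equiv.sum_comp e1 (fun a => J (a, e2 b'))
  have hj : ent (fun p : A' × B' => J (e1 p.1, e2 p.2)) = ent J :=
    ent_relabel (Equiv.prodCongr e1 e2) _ _ fun p => rfl
  simp only [mutInf]
  rw [ha, hb, hj]

lemma BSC_flip (E : ℝ) (x y : Bool) : BSC E (!x) y = BSC E x (!y) := by
  cases x <;> cases y <;> simp [BSC]

lemma JUX_Vs (V : Bool → (Bool → Bool) → ℝ) :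
    JUX unifBool (Vs V) = fun p => JUX unifBool V (eU p.1, eB p.2) := rfl

lemma JUY_Vs (V : Bool → (Bool → Bool) → ℝ) (E : ℝ) :
    JUY unifBool (Vs V) (BSC E) = fun p => JUY unifBool V (BSC E) (eU p.1, eB p.2) := by
  funext p
  obtain ⟨u, y⟩ := p
  show ∑ x, unifBool x * Vs V x u * BSC E x y = ∑ x, unifBool x * V x (sg u) * BSC E x (!y)
  refine Fintype.sum_equiv eB _ _ fun x => ?_
  show unifBool x * Vs V x u * BSC E x y = unifBool (!x) * V (!x) (sg u) * BSC E (!x) (!y)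
  have h2 : BSC E (!x) (!y) = BSC E x y := by rw [BSC_flip, Bool.not_not]
  rw [h2]
  rfl

lemma phi_Vs (V : Bool → (Bool → Bool) → ℝ) (E : ℝ) :
    phi unifBool (Vs V) (BSC E) = phi unifBool V (BSC E) := by
  rw [phi_def, phi_def, JUX_Vs, JUY_Vs,
    mutInf_relabel eU eB (JUX unifBool V),
    mutInf_relabel eU eB (JUY unifBool V (BSC E))]

lemma Vs_channel {V : Bool → (Bool → Bool) → ℝ} (hV : IsChannel V) : IsChannel (Vs V) := by
  intro x
  constructor
  · intro u; exact (hV (!x)).1 (sg u)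
  · have h : ∑ u, Vs V x u = ∑ u, V (!x) u := by
      refine Fintype.sum_equiv eU _ _ fun u => rfl
    rw [h, (hV (!x)).2]

lemma dVW_Vs (V : Bool → (Bool → Bool) → ℝ) (E : ℝ) :
    dVW unifBool hamBool (Vs V) (BSC E) = dVW unifBool hamBool V (BSC E) := by
  rw [dVW, dVW]
  refine Fintype.sum_equiv eU _ _ fun u => ?_
  refine Fintype.sum_equiv eB _ _ fun x => ?_
  refine Fintype.sum_equiv eB _ _ fun y => ?_
  show unifBool x * Vs V x u * BSC E x y * hamBool x (u y)
    = unifBool (!x) * V (!x) (sg u) * BSC E (!x) (!y) * hamBool (!x) (sg u (!y))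
  have h2 : BSC E (!x) (!y) = BSC E x y := by rw [BSC_flip, Bool.not_not]
  have h3 : hamBool (!x) (sg u (!y)) = hamBool x (u y) := by
    show hamBool (!x) (!(u (!(!y)))) = hamBool x (u y)
    rw [Bool.not_not]
    cases x <;> cases h : u y <;> simp [hamBool]
  rw [h2, h3]
  rfl

lemma dVW_mix (P : Bool → ℝ) (d : Bool → Bool → ℝ) (V₁ V₂ : Bool → (Bool → Bool) → ℝ)
    (W : Bool → Bool → ℝ) :
    dVW P d (fun x u => (V₁ x u + V₂ x u) / 2) W = (dVW P d V₁ W + dVW P d V₂ W) / 2 := by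
  rw [dVW, dVW, dVW, ← Finset.sum_add_distrib, Finset.sum_div]
  refine Finset.sum_congr rfl fun u _ => ?_
  rw [← Finset.sum_add_distrib, Finset.sum_div]
  refine Finset.sum_congr rfl fun x _ => ?_
  rw [← Finset.sum_add_distrib, Finset.sum_div]
  refine Finset.sum_congr rfl fun y _ => by ring

/-! ### concrete evaluations on `Bool` -/

lemma unif_nonneg : ∀ x, 0 ≤ unifBool x := fun _ => by norm_num [unifBool]
lemma unif_total : ∑ x, unifBool x = 1 := by
  rw [Fintype.sum_bool]; norm_num [unifBool]
lemma unif_dist : IsDist unifBool := ⟨unif_nonneg, unif_total⟩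

lemma BSC_ff (E : ℝ) : BSC E false false = 1 - E := rfl
lemma BSC_ft (E : ℝ) : BSC E false true = E := rfl
lemma BSC_tf (E : ℝ) : BSC E true false = E := rfl
lemma BSC_tt (E : ℝ) : BSC E true true = 1 - E := rfl

lemma BSC_channel {E : ℝ} (h0 : 0 ≤ E) (h1 : E ≤ 1) : IsChannel (BSC E) := by
  intro x
  constructor
  · intro y; cases x <;> cases y <;> simp [BSC] <;> linarith
  · rw [Fintype.sum_bool]; cases x <;> simp [BSC]

lemma eDist_eval (W : Bool → Bool → ℝ) :
    eDist unifBool hamBool W = (W false true + W true false) / 2 := by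
  rw [eDist, Fintype.sum_bool, Fintype.sum_bool, Fintype.sum_bool]
  simp [unifBool, hamBool]
  ring

lemma BSC_mem {E : ℝ} (h0 : 0 ≤ E) (h1 : E ≤ 1) : BSC E ∈ W1 unifBool hamBool E := by
  constructor
  · exact BSC_channel h0 h1
  · rw [eDist_eval, BSC_ft, BSC_tf]; linarith

lemma PYm_eval (W : Bool → Bool → ℝ) (y : Bool) :
    PYm unifBool W y = (W false y + W true y) / 2 := by
  rw [PYm, Fintype.sum_bool]
  simp [unifBool]
  ring

lemma JUY_eval (Vp : Bool → (Bool → Bool) → ℝ) (W : Bool → Bool → ℝ)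
    (u : Bool → Bool) (y : Bool) :
    JUY unifBool Vp W (u, y) = (Vp false u * W false y + Vp true u * W true y) / 2 := by
  rw [JUY, Fintype.sum_bool]
  simp [unifBool]
  ring

lemma JUY_margU {X Y Xh : Type*} [Fintype X] [Fintype Y] [Fintype Xh] [DecidableEq Y]
    [DecidableEq Xh] {P : X → ℝ} {V : X → (Y → Xh) → ℝ} {W : X → Y → ℝ}
    (hV : IsChannel V) (y : Y) :
    ∑ u, JUY P V W (u, y) = PYm P W y := by
  rw [PYm]
  rw [show ∑ u, JUY P V W (u, y) = ∑ u, ∑ x, P x * V x u * W x y from rfl, Finset.sum_comm]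
  refine Finset.sum_congr rfl fun x _ => ?_
  have h : ∀ u, P x * V x u * W x y = V x u * (P x * W x y) := fun u => by ring
  rw [Finset.sum_congr rfl fun u _ => h u, ← Finset.sum_mul, (hV x).2, one_mul]

lemma PYm_total {W : Bool → Bool → ℝ} (hW : IsChannel W) :
    ∑ y, PYm unifBool W y = 1 := by
  have h1 := (hW false).2
  have h2 := (hW true).2
  rw [Fintype.sum_bool] at h1 h2
  rw [Fintype.sum_bool, PYm_eval, PYm_eval]
  linarith

lemma logb_half : Real.logb 2 (1 / 2 : ℝ) = -1 := by
  rw [show (1 / 2 : ℝ) = 2⁻¹ by norm_num, Real.logb_inv, Real.logb_self_eq_one (by norm_num)]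

lemma half_logb (x : ℝ) :
    x / 2 * Real.logb 2 (x / 2) = (x * Real.logb 2 x - x) / 2 := by
  have h : x / 2 = x * (1 / 2) := by ring
  rw [h]
  have := coef_logb_mul (x * (1 / 2)) x (1 / 2)
    (fun hc => ⟨fun h0 => hc (by rw [h0]; ring), by norm_num⟩)
  rw [this, logb_half]
  ring

section LessNoisy

set_option maxHeartbeats 2000000 in
/-- the "less noisy" comparison: within the class `W1(E)`, the channel `BSC E` maximizes
`phi Vp ·` over symmetric merged decoder channels `Vp`. -/
lemma phi_lessNoisy (E : ℝ) (hE0 : 0 < E) (hE : E ≤ 1 / 2)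
    (Vp : Bool → (Bool → Bool) → ℝ) (hVp : IsChannel Vp)
    (hnot : ∀ x, Vp x uNot = 0)
    (hsym1 : Vp true uId = Vp false uId)
    (hsym0 : Vp true (uC true) = Vp false (uC false))
    (hsym2 : Vp true (uC false) = Vp false (uC true))
    (W : Bool → Bool → ℝ) (hW : IsChannel W)
    (heW : eDist unifBool hamBool W ≤ E) :
    phi unifBool Vp W ≤ phi unifBool Vp (BSC E) := by
  have hB : IsChannel (BSC E) := BSC_channel (le_of_lt hE0) (by linarith)
  set lam := Vp false uId with hlam
  set p0 := Vp false (uC false) with hp0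
  set p1 := Vp false (uC true) with hp1
  set a := W false true with ha
  set b := W true false with hb
  -- channel facts
  have hVn : ∀ x u, 0 ≤ Vp x u := fun x => (hVp x).1
  have hV1 : ∀ x u, Vp x u ≤ 1 := fun x => entry_le_one (hVp x).1 (hVp x).2
  have hlam0 : 0 ≤ lam := hVn false uId
  have hp00 : 0 ≤ p0 := hVn false (uC false)
  have hp10 : 0 ≤ p1 := hVn false (uC true)
  have hrow : lam + p0 + p1 = 1 := by
    have h := (hVp false).2
    rw [sumU, hnot false] at h
    rw [hlam, hp0, hp1]; linarith
  have hWn : ∀ x y, 0 ≤ W x y := fun x => (hW x).1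
  have hWff : W false false = 1 - a := by
    have h := (hW false).2; rw [Fintype.sum_bool] at h; rw [ha]; linarith
  have hWtt : W true true = 1 - b := by
    have h := (hW true).2; rw [Fintype.sum_bool] at h; rw [hb]; linarith
  have hm : (a + b) / 2 ≤ E := by
    rw [eDist_eval] at heW; rw [ha, hb]; linarith
  set g1 := p1 * E + p0 * (1 - E) with hg1
  set g0 := p0 * E + p1 * (1 - E) with hg0
  have hE1 : (0:ℝ) ≤ 1 - E := by linarith
  have hg10 : 0 ≤ g1 := by
    rw [hg1]
    have := mul_nonneg hp10 (le_of_lt hE0)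
    have := mul_nonneg hp00 hE1
    linarith
  have hg00 : 0 ≤ g0 := by
    rw [hg0]
    have := mul_nonneg hp00 (le_of_lt hE0)
    have := mul_nonneg hp10 hE1
    linarith
  -- entry values of JUY for W
  have hJid : ∀ y, JUY unifBool Vp W (uId, y) = lam * PYm unifBool W y := by
    intro y; rw [JUY_eval, PYm_eval, hsym1, ← hlam]; ring
  have hJnot : ∀ y, JUY unifBool Vp W (uNot, y) = 0 := by
    intro y; rw [JUY_eval, hnot, hnot]; ring
  have hJc1 : ∀ y, JUY unifBool Vp W (uC true, y) = (p1 * W false y + p0 * W true y) / 2 := by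
    intro y; rw [JUY_eval, hsym0, ← hp1]
  have hJc0 : ∀ y, JUY unifBool Vp W (uC false, y) = (p0 * W false y + p1 * W true y) / 2 := by
    intro y; rw [JUY_eval, hsym2, ← hp0]
  -- positivity dichotomy for the constant decoders
  have hgpos : ¬(p0 = 0 ∧ p1 = 0) → 0 < g1 ∧ 0 < g0 := by
    intro h
    have hc : 0 < p0 ∨ 0 < p1 := by
      rcases eq_or_lt_of_le hp00 with h0 | h0
      · rcases eq_or_lt_of_le hp10 with h1 | h1
        · exact absurd ⟨h0.symm, h1.symm⟩ h
        · exact Or.inr h1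
      · exact Or.inl h0
    have hE1' : (0:ℝ) < 1 - E := by linarith
    rcases hc with h0 | h1
    · have q1 := mul_pos h0 hE1'
      have q2 := mul_pos h0 hE0
      have q3 := mul_nonneg hp10 (le_of_lt hE0)
      have q4 := mul_nonneg hp10 (le_of_lt hE1')
      constructor
      · rw [hg1]; linarith
      · rw [hg0]; linarith
    · have q1 := mul_pos h1 hE1'
      have q2 := mul_pos h1 hE0
      have q3 := mul_nonneg hp00 (le_of_lt hE0)
      have q4 := mul_nonneg hp00 (le_of_lt hE1')
      constructor
      · rw [hg1]; linarith
      · rw [hg0]; linarith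
  -- the comparison measure
  set Q : (Bool → Bool) → Bool → ℝ := fun u y =>
    if u = uId then lam else if u = uC true then (if y then g1 else g0)
      else if u = uC false then (if y then g0 else g1) else 0 with hQ
  have d1 : ¬(uNot = uId) := by decide
  have d2 : ¬(uNot = uC true) := by decide
  have d3 : ¬(uNot = uC false) := by decide
  have d4 : ¬(uC true = uId) := by decide
  have d5 : ¬(uC false = uId) := by decide
  have d6 : ¬(uC false = uC true) := by decide
  have hQid : ∀ y, Q uId y = lam := by
    intro y; simp [hQ]
  have hQnot : ∀ y, Q uNot y = 0 := by
    intro y; simp [hQ, d1, d2, d3]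
  have hQc1t : Q (uC true) true = g1 := by simp [hQ, d4]
  have hQc1f : Q (uC true) false = g0 := by simp [hQ, d4]
  have hQc0t : Q (uC false) true = g0 := by simp [hQ, d5, d6]
  have hQc0f : Q (uC false) false = g1 := by simp [hQ, d5, d6]
  have hQn : ∀ u y, 0 ≤ Q u y := by
    intro u y
    rcases ucases u with h | h | h | h <;> subst h
    · cases y
      · rw [hQc0f]; exact hg10
      · rw [hQc0t]; exact hg00
    · cases y
      · rw [hQc1f]; exact hg00
      · rw [hQc1t]; exact hg10
    · rw [hQid]; exact hlam0
    · rw [hQnot]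
  -- J ≤ PY entrywise
  have hJle : ∀ u y, JUY unifBool Vp W (u, y) ≤ PYm unifBool W y := by
    intro u y
    rw [JUY_eval, PYm_eval]
    have q1 : Vp false u * W false y ≤ W false y :=
      mul_le_of_le_one_left (hWn false y) (hV1 false u)
    have q2 : Vp true u * W true y ≤ W true y :=
      mul_le_of_le_one_left (hWn true y) (hV1 true u)
    linarith
  have hJn : ∀ p, 0 ≤ JUY unifBool Vp W p := JUY_nonneg unif_nonneg hVp hW
  -- the factorization condition
  have hfac : ∀ (u : Bool → Bool) (y : Bool), JUY unifBool Vp W (u, y) ≠ 0 →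
      PYm unifBool W y ≠ 0 ∧ Q u y ≠ 0 := by
    intro u y hJ
    have hJpos : 0 < JUY unifBool Vp W (u, y) := lt_of_le_of_ne (hJn (u, y)) (Ne.symm hJ)
    have hPY : 0 < PYm unifBool W y := lt_of_lt_of_le hJpos (hJle u y)
    refine ⟨ne_of_gt hPY, ?_⟩
    rcases ucases u with h | h | h | h <;> subst h
    · have hne : ¬(p0 = 0 ∧ p1 = 0) := by
        rintro ⟨h0, h1⟩
        rw [hJc0, h0, h1] at hJ
        simp at hJ
      rcases hgpos hne with ⟨hg1p, hg0p⟩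
      cases y
      · rw [hQc0f]; exact ne_of_gt hg1p
      · rw [hQc0t]; exact ne_of_gt hg0p
    · have hne : ¬(p0 = 0 ∧ p1 = 0) := by
        rintro ⟨h0, h1⟩
        rw [hJc1, h0, h1] at hJ
        simp at hJ
      rcases hgpos hne with ⟨hg1p, hg0p⟩
      cases y
      · rw [hQc1f]; exact ne_of_gt hg0p
      · rw [hQc1t]; exact ne_of_gt hg1p
    · rw [hQid]
      intro hl
      rw [hJid y, hl] at hJ
      simp at hJ
    · rw [hJnot] at hJ
      exact absurd rfl hJ
  -- Gibbs
  set q : (Bool → Bool) × Bool → ℝ := fun p => PYm unifBool W p.2 * Q p.1 p.2 with hq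
  have hPYn : ∀ y, 0 ≤ PYm unifBool W y := by
    intro y; rw [PYm_eval]; have := hWn false y; have := hWn true y; linarith
  have hqn : ∀ p, 0 ≤ q p := fun p => mul_nonneg (hPYn p.2) (hQn p.1 p.2)
  have hpq : ∀ p, JUY unifBool Vp W p ≠ 0 → q p ≠ 0 := by
    intro p hJ
    obtain ⟨h1, h2⟩ := hfac p.1 p.2 (by rwa [show (p.1, p.2) = p from rfl])
    exact mul_ne_zero h1 h2
  have hQsum : ∀ y, ∑ u, Q u y = 1 := by
    intro y
    have hgg : g1 + g0 = p0 + p1 := by rw [hg1, hg0]; ring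
    cases y
    · rw [sumU, hQc0f, hQc1f, hQid, hQnot]; linarith
    · rw [sumU, hQc0t, hQc1t, hQid, hQnot]; linarith
  have hq1 : ∑ p, q p ≤ 1 := by
    have h1 : ∑ p : (Bool → Bool) × Bool, q p = ∑ y, PYm unifBool W y * (∑ u, Q u y) := by
      rw [Fintype.sum_prod_type, Finset.sum_comm]
      refine Finset.sum_congr rfl fun y _ => ?_
      simp only [hq]
      rw [Finset.mul_sum]
    have h2 : ∑ y, PYm unifBool W y * (∑ u, Q u y) = ∑ y, PYm unifBool W y :=
      Finset.sum_congr rfl fun y _ => by rw [hQsum y, mul_one]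
    rw [h1, h2, PYm_total hW]
  have hgibbs := gibbs (JUY unifBool Vp W) q hJn hqn hpq hq1 (sum_JUY_total hVp hW unif_total)
  -- identities
  have claimA : ∑ y, PYm unifBool W y * Real.logb 2 (PYm unifBool W y)
      = ∑ p : (Bool → Bool) × Bool, JUY unifBool Vp W p * Real.logb 2 (PYm unifBool W p.2) := by
    rw [Fintype.sum_prod_type, Finset.sum_comm]
    refine Finset.sum_congr rfl fun y _ => ?_
    simp only
    rw [← Finset.sum_mul, JUY_margU hVp]
  have hsplitq : ∑ p : (Bool → Bool) × Bool, JUY unifBool Vp W p * Real.logb 2 (q p)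
      = (∑ p : (Bool → Bool) × Bool, JUY unifBool Vp W p * Real.logb 2 (PYm unifBool W p.2))
        + ∑ p : (Bool → Bool) × Bool, JUY unifBool Vp W p * Real.logb 2 (Q p.1 p.2) := by
    rw [← Finset.sum_add_distrib]
    refine Finset.sum_congr rfl fun p _ => ?_
    rw [hq]
    exact coef_logb_mul _ _ _ (fun hc => hfac p.1 p.2 (by rwa [show (p.1, p.2) = p from rfl]))
  -- the cross term
  set m := (a + b) / 2 with hmm
  set A := p1 * m + p0 * (1 - m) with hA
  set Bq := p0 * m + p1 * (1 - m) with hBq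
  have hPYtot : PYm unifBool W true + PYm unifBool W false = 1 := by
    have := PYm_total hW; rwa [Fintype.sum_bool] at this
  have hCT : ∑ p : (Bool → Bool) × Bool, JUY unifBool Vp W p * Real.logb 2 (Q p.1 p.2)
      = lam * Real.logb 2 lam + A * Real.logb 2 g1 + Bq * Real.logb 2 g0 := by
    rw [Fintype.sum_prod_type, sumU]
    simp only [Fintype.sum_bool]
    rw [hJc0 true, hJc0 false, hJc1 true, hJc1 false, hJid true, hJid false,
      hJnot true, hJnot false, hQc0t, hQc0f, hQc1t, hQc1f,
      hQid true, hQid false, hQnot true, hQnot false]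
    rw [hWff, hWtt, hA, hBq, hmm]
    linear_combination (lam * Real.logb 2 lam) * hPYtot
  -- entropies at the BSC
  have hJBid : ∀ y, JUY unifBool Vp (BSC E) (uId, y) = lam / 2 := by
    intro y; rw [JUY_eval, hsym1, ← hlam]; cases y
    · rw [BSC_ff, BSC_tf]; ring
    · rw [BSC_ft, BSC_tt]; ring
  have hJBnot : ∀ y, JUY unifBool Vp (BSC E) (uNot, y) = 0 := by
    intro y; rw [JUY_eval, hnot, hnot]; ring
  have hJBc1t : JUY unifBool Vp (BSC E) (uC true, true) = g1 / 2 := by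
    rw [JUY_eval, hsym0, ← hp1, BSC_ft, BSC_tt, hg1]; try ring
  have hJBc1f : JUY unifBool Vp (BSC E) (uC true, false) = g0 / 2 := by
    rw [JUY_eval, hsym0, ← hp1, BSC_ff, BSC_tf, hg0]; try ring
  have hJBc0t : JUY unifBool Vp (BSC E) (uC false, true) = g0 / 2 := by
    rw [JUY_eval, hsym2, ← hp0, BSC_ft, BSC_tt, hg0]; try ring
  have hJBc0f : JUY unifBool Vp (BSC E) (uC false, false) = g1 / 2 := by
    rw [JUY_eval, hsym2, ← hp0, BSC_ff, BSC_tf, hg1]; try ring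
  have hPYB : ∀ y, PYm unifBool (BSC E) y = 1 / 2 := by
    intro y; rw [PYm_eval]; cases y
    · rw [BSC_ff, BSC_tf]; ring
    · rw [BSC_ft, BSC_tt]; ring
  have hentPYB : ent (PYm unifBool (BSC E)) = 1 := by
    rw [ent, Fintype.sum_bool, hPYB, hPYB, logb_half]
    norm_num
  have hentJB : ent (JUY unifBool Vp (BSC E))
      = -(lam * Real.logb 2 lam + g1 * Real.logb 2 g1 + g0 * Real.logb 2 g0) + 1 := by
    rw [ent, Fintype.sum_prod_type, sumU]
    simp only [Fintype.sum_bool]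
    rw [hJBc0t, hJBc0f, hJBc1t, hJBc1f, hJBid true, hJBid false, hJBnot true, hJBnot false]
    rw [half_logb lam, half_logb g1, half_logb g0]
    have hgg : g1 + g0 = p0 + p1 := by rw [hg1, hg0]; ring
    have hsum1 : lam + g1 + g0 = 1 := by linarith
    linear_combination hsum1
  have hentPYW : ent (PYm unifBool W)
      = - ∑ y, PYm unifBool W y * Real.logb 2 (PYm unifBool W y) := by rw [ent]
  have hentJW : ent (JUY unifBool Vp W)
      = - ∑ p : (Bool → Bool) × Bool,
          JUY unifBool Vp W p * Real.logb 2 (JUY unifBool Vp W p) := by rw [ent]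
  -- the final monotonicity step
  have hABsum : A + Bq = g1 + g0 := by rw [hA, hBq, hg1, hg0]; ring
  have hfinal : -(lam * Real.logb 2 lam + A * Real.logb 2 g1 + Bq * Real.logb 2 g0)
      ≤ -(lam * Real.logb 2 lam + g1 * Real.logb 2 g1 + g0 * Real.logb 2 g0) := by
    have hexp : A * Real.logb 2 g1 + Bq * Real.logb 2 g0
        - g1 * Real.logb 2 g1 - g0 * Real.logb 2 g0
        = (g1 - A) * (Real.logb 2 g0 - Real.logb 2 g1) := by
      linear_combination Real.logb 2 g0 * hABsum
    rcases lt_trichotomy p0 p1 with h | h | h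
    · have hne : ¬(p0 = 0 ∧ p1 = 0) := by rintro ⟨h0, h1⟩; rw [h0, h1] at h; exact lt_irrefl 0 h
      obtain ⟨hg1p, hg0p⟩ := hgpos hne
      have hq1 : (0:ℝ) ≤ (p1 - p0) * (E - m) :=
        mul_nonneg (by linarith) (by rw [hmm]; linarith)
      have h1 : 0 ≤ g1 - A := by
        rw [hA, hg1]; linear_combination hq1
      have hq2 : (0:ℝ) ≤ (p1 - p0) * (1 - 2 * E) :=
        mul_nonneg (by linarith) (by linarith)
      have h2 : g1 ≤ g0 := by rw [hg1, hg0]; linear_combination hq2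
      have h3 : Real.logb 2 g1 ≤ Real.logb 2 g0 :=
        Real.logb_le_logb_of_le (by norm_num) hg1p h2
      have h4 := mul_nonneg h1 (sub_nonneg.2 h3)
      linarith [hexp, h4]
    · have hAg : A = g1 := by rw [hA, hg1, h]; ring
      have hBg : Bq = g0 := by rw [hBq, hg0, h]; ring
      rw [hAg, hBg]
    · have hne : ¬(p0 = 0 ∧ p1 = 0) := by rintro ⟨h0, h1⟩; rw [h0, h1] at h; exact lt_irrefl 0 h
      obtain ⟨hg1p, hg0p⟩ := hgpos hne
      have hq1 : (0:ℝ) ≤ (p0 - p1) * (E - m) :=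
        mul_nonneg (by linarith) (by rw [hmm]; linarith)
      have h1 : g1 - A ≤ 0 := by
        rw [hA, hg1]; linear_combination hq1
      have hq2 : (0:ℝ) ≤ (p0 - p1) * (1 - 2 * E) :=
        mul_nonneg (by linarith) (by linarith)
      have h2 : g0 ≤ g1 := by rw [hg1, hg0]; linear_combination hq2
      have h3 : Real.logb 2 g0 ≤ Real.logb 2 g1 :=
        Real.logb_le_logb_of_le (by norm_num) hg0p h2
      have h4 := mul_nonneg (neg_nonneg.2 h1) (neg_nonneg.2 (sub_nonpos.2 h3))
      have h5 : (0:ℝ) ≤ (g1 - A) * (Real.logb 2 g0 - Real.logb 2 g1) := by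
        have : -(g1 - A) * -(Real.logb 2 g0 - Real.logb 2 g1)
            = (g1 - A) * (Real.logb 2 g0 - Real.logb 2 g1) := by ring
        linarith [this ▸ h4]
      linarith [hexp, h5]
  -- assemble
  rw [phi_eq' hVp hW, phi_eq' hVp hB]
  have hWside : ent (JUY unifBool Vp W) - ent (PYm unifBool W)
      ≤ -(lam * Real.logb 2 lam + A * Real.logb 2 g1 + Bq * Real.logb 2 g0) := by
    rw [hentJW, hentPYW, claimA]
    have hg2 := hgibbs
    rw [hsplitq, hCT] at hg2
    linarith
  have hBside : ent (JUY unifBool Vp (BSC E)) - ent (PYm unifBool (BSC E))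
      = -(lam * Real.logb 2 lam + g1 * Real.logb 2 g1 + g0 * Real.logb 2 g0) := by
    rw [hentJB, hentPYB]; ring
  linarith

end LessNoisy

lemma uC_app (v y : Bool) : uC v y = v := rfl
lemma uId_app (y : Bool) : uId y = y := rfl
lemma uNot_app (y : Bool) : uNot y = !y := rfl

lemma sg_uId : sg uId = uId := by decide
lemma sg_uNot : sg uNot = uNot := by decide
lemma sg_uC0 : sg (uC false) = uC true := by decide
lemma sg_uC1 : sg (uC true) = uC false := by decide

/-- evaluation of `dVW` for a symmetric test channel. -/
lemma dVW_sym_eval (V : Bool → (Bool → Bool) → ℝ) (W : Bool → Bool → ℝ)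
    (hsI : V true uId = V false uId) (hsN : V true uNot = V false uNot)
    (hs0 : V true (uC true) = V false (uC false))
    (hs2 : V true (uC false) = V false (uC true))
    (hW : IsChannel W) :
    dVW unifBool hamBool V W
      = V false uId * ((W false true + W true false) / 2)
        + V false uNot * (1 - (W false true + W true false) / 2)
        + V false (uC true) := by
  have h0 := (hW false).2
  have h1 := (hW true).2
  rw [Fintype.sum_bool] at h0 h1
  rw [dVW, sumU]
  simp only [Fintype.sum_bool, uC_app, uId_app, uNot_app]
  simp only [unifBool, hamBool]
  norm_num
  rw [hsI, hsN, hs2]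
  linear_combination (V false uNot / 2 + V false (uC true) / 2) * h0
    + (V false uNot / 2 + V false (uC true) / 2) * h1

/-- the cheating test channel: `u = const x`. -/
def Vch : Bool → (Bool → Bool) → ℝ := fun x u => if u = uC x then 1 else 0

lemma Vch_channel : IsChannel Vch := by
  intro x
  constructor
  · intro u
    rw [Vch]
    by_cases h : u = uC x
    · rw [if_pos h]; norm_num
    · rw [if_neg h]
  · rw [sumU]
    cases x
    · rw [Vch, if_pos rfl, Vch, if_neg (by decide : ¬(uC true = uC false)),
        Vch, if_neg (by decide : ¬(uId = uC false)), Vch,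
        if_neg (by decide : ¬(uNot = uC false))]
      norm_num
    · rw [Vch, if_neg (by decide : ¬(uC false = uC true)), Vch, if_pos rfl,
        Vch, if_neg (by decide : ¬(uId = uC true)), Vch,
        if_neg (by decide : ¬(uNot = uC true))]
      norm_num

lemma Vch_dVW (W : Bool → Bool → ℝ) : dVW unifBool hamBool Vch W = 0 := by
  rw [dVW]
  refine Finset.sum_eq_zero fun u _ =>
    Finset.sum_eq_zero fun x _ => Finset.sum_eq_zero fun y _ => ?_
  by_cases h : u = uC x
  · subst h
    have : hamBool x (uC x y) = 0 := by cases x <;> rfl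
    rw [this, mul_zero]
  · rw [Vch, if_neg h]
    ring

lemma Vch_Vrob {E D : ℝ} (hD : 0 ≤ D) : Vch ∈ Vrob unifBool hamBool hamBool E D :=
  ⟨Vch_channel, fun W _ => by rw [Vch_dVW]; exact hD⟩

lemma Vch_Vset {W : Bool → Bool → ℝ} {D : ℝ} (hD : 0 ≤ D) :
    Vch ∈ Vset unifBool hamBool W D :=
  ⟨Vch_channel, by rw [Vch_dVW]; exact hD⟩

/-! ### bounds on `phi` -/

lemma mutInf_abs_le {A B : Type*} [Fintype A] [Fintype B] (J : A × B → ℝ)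
    (h0 : ∀ p, 0 ≤ J p) (h1 : ∑ p, J p = 1) :
    |mutInf J| ≤ 2 * (Fintype.card A : ℝ) + 2 * (Fintype.card B : ℝ)
      + 2 * ((Fintype.card A : ℝ) * (Fintype.card B : ℝ)) := by
  have hA0 : ∀ a, 0 ≤ ∑ b, J (a, b) := fun a => Finset.sum_nonneg fun b _ => h0 (a, b)
  have hA1 : (∑ a, ∑ b, J (a, b)) = 1 := by rw [← Fintype.sum_prod_type, h1]
  have hB0 : ∀ b, 0 ≤ ∑ a, J (a, b) := fun b => Finset.sum_nonneg fun a _ => h0 (a, b)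
  have hB1 : (∑ b, ∑ a, J (a, b)) = 1 := by rw [Finset.sum_comm, hA1]
  have hJ1 : ∀ p, J p ≤ 1 := entry_le_one h0 h1
  have hmA1 : ∀ a, (∑ b, J (a, b)) ≤ 1 := entry_le_one hA0 hA1
  have hmB1 : ∀ b, (∑ a, J (a, b)) ≤ 1 := entry_le_one hB0 hB1
  have e1 := ent_nonneg hA0 hmA1
  have e2 := ent_le hA0 hmA1
  have e3 := ent_nonneg hB0 hmB1
  have e4 := ent_le hB0 hmB1
  have e5 := ent_nonneg h0 hJ1
  have e6 := ent_le h0 hJ1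
  rw [Fintype.card_prod] at e6
  push_cast at e2 e4 e6
  have c1 : (0:ℝ) ≤ (Fintype.card A : ℝ) := by positivity
  have c2 : (0:ℝ) ≤ (Fintype.card B : ℝ) := by positivity
  have c3 : (0:ℝ) ≤ (Fintype.card A : ℝ) * (Fintype.card B : ℝ) := by positivity
  rw [mutInf, abs_le]
  constructor <;> linarith

lemma sum_JUX_total {V : Bool → (Bool → Bool) → ℝ} (hV : IsChannel V) :
    ∑ p : (Bool → Bool) × Bool, JUX unifBool V p = 1 := by
  rw [Fintype.sum_prod_type, Finset.sum_comm]
  have h : ∀ x : Bool, ∑ u, JUX unifBool V (u, x) = unifBool x := by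
    intro x
    rw [show ∑ u, JUX unifBool V (u, x) = ∑ u, unifBool x * V x u from rfl, ← Finset.mul_sum,
      (hV x).2, mul_one]
  rw [Finset.sum_congr rfl fun x _ => h x, unif_total]

lemma JUX_nonneg {V : Bool → (Bool → Bool) → ℝ} (hV : IsChannel V) :
    ∀ p, 0 ≤ JUX unifBool V p := fun p =>
  mul_nonneg (unif_nonneg p.2) ((hV p.2).1 p.1)

lemma phi_abs_le {V : Bool → (Bool → Bool) → ℝ} {W : Bool → Bool → ℝ}
    (hV : IsChannel V) (hW : IsChannel W) : |phi unifBool V W| ≤ 56 := by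
  rw [phi_def]
  have h1 := mutInf_abs_le (JUX unifBool V) (JUX_nonneg hV) (sum_JUX_total hV)
  have h2 := mutInf_abs_le (JUY unifBool V W) (JUY_nonneg unif_nonneg hV hW)
    (sum_JUY_total hV hW unif_total)
  have hc : Fintype.card (Bool → Bool) = 4 := by decide
  have hcb : Fintype.card Bool = 2 := by decide
  rw [hc, hcb] at h1 h2
  norm_num at h1 h2
  rw [abs_le] at h1 h2 ⊢
  constructor <;> linarith [h1.1, h1.2, h2.1, h2.2]

lemma phi_le {V : Bool → (Bool → Bool) → ℝ} {W : Bool → Bool → ℝ}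
    (hV : IsChannel V) (hW : IsChannel W) : phi unifBool V W ≤ 56 :=
  (abs_le.1 (phi_abs_le hV hW)).2

lemma phi_ge {V : Bool → (Bool → Bool) → ℝ} {W : Bool → Bool → ℝ}
    (hV : IsChannel V) (hW : IsChannel W) : -56 ≤ phi unifBool V W :=
  (abs_le.1 (phi_abs_le hV hW)).1

/-! ### the key transformation -/

lemma key_transform (D E : ℝ) (hE0 : 0 < E) (hE : E ≤ 1 / 2)
    (V : Bool → (Bool → Bool) → ℝ) (hV : IsChannel V)
    (hVd : dVW unifBool hamBool V (BSC E) ≤ D) :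
    ∃ V', V' ∈ Vrob unifBool hamBool hamBool E D ∧
      ∀ W ∈ W1 unifBool hamBool E, phi unifBool V' W ≤ phi unifBool V (BSC E) := by
  have hB : IsChannel (BSC E) := BSC_channel (le_of_lt hE0) (by linarith)
  set Vm : Bool → (Bool → Bool) → ℝ := fun x u => (V x u + Vs V x u) / 2 with hVm
  have hVs : IsChannel (Vs V) := Vs_channel hV
  have hVmch : IsChannel Vm := mix_channel hV hVs
  set V' := mer Vm with hV'
  have hV'ch : IsChannel V' := mer_channel hVmch
  -- symmetry of Vm
  have hmI : Vm true uId = Vm false uId := by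
    simp only [hVm, Vs, sg_uId, Bool.not_true, Bool.not_false]; ring
  have hmN : Vm true uNot = Vm false uNot := by
    simp only [hVm, Vs, sg_uNot, Bool.not_true, Bool.not_false]; ring
  have hm0 : Vm true (uC true) = Vm false (uC false) := by
    simp only [hVm, Vs, sg_uC1, sg_uC0, Bool.not_true, Bool.not_false]; ring
  have hm2 : Vm true (uC false) = Vm false (uC true) := by
    simp only [hVm, Vs, sg_uC0, sg_uC1, Bool.not_true, Bool.not_false]; ring
  -- symmetry of V'
  have hpnot : ∀ x, V' x uNot = 0 := fun x => mer_uNot x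
  have hpI : V' true uId = V' false uId := by
    rw [hV', mer_uId, mer_uId, hmI, hmN]
  have hp0 : V' true (uC true) = V' false (uC false) := by
    rw [hV', mer_uC, mer_uC, hm0]
  have hp2 : V' true (uC false) = V' false (uC true) := by
    rw [hV', mer_uC, mer_uC, hm2]
  -- distortion of Vm at the BSC
  have hVmd : dVW unifBool hamBool Vm (BSC E) ≤ D := by
    rw [hVm, dVW_mix, dVW_Vs]
    linarith
  have heval2 := dVW_sym_eval Vm (BSC E) hmI hmN hm0 hm2 hB
  rw [BSC_ft, BSC_tf, show ((E:ℝ) + E) / 2 = E from by ring] at heval2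
  have hVmd' : Vm false uId * E + Vm false uNot * (1 - E) + Vm false (uC true) ≤ D := by
    rw [← heval2]; exact hVmd
  have hVmn : ∀ x u, 0 ≤ Vm x u := fun x => (hVmch x).1
  refine ⟨V', ⟨hV'ch, ?_⟩, ?_⟩
  · -- robustness
    intro W hW
    obtain ⟨hWch, hWe⟩ := hW
    have hpN : V' true uNot = V' false uNot := by rw [hpnot, hpnot]
    have heval := dVW_sym_eval V' W hpI hpN hp0 hp2 hWch
    rw [hpnot false, zero_mul, add_zero] at heval
    have hm' : (W false true + W true false) / 2 ≤ E := by
      rw [eDist_eval] at hWe; exact hWe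
    have hVid : V' false uId = Vm false uId + Vm false uNot := mer_uId false
    have hVc1 : V' false (uC true) = Vm false (uC true) := mer_uC true false
    have hVidn : 0 ≤ V' false uId := (hV'ch false).1 uId
    have hmul : V' false uId * ((W false true + W true false) / 2) ≤ V' false uId * E :=
      mul_le_mul_of_nonneg_left hm' hVidn
    have hnn : 0 ≤ Vm false uNot := hVmn false uNot
    have hEE : E ≤ 1 - E := by linarith
    have hstep : Vm false uNot * E ≤ Vm false uNot * (1 - E) :=
      mul_le_mul_of_nonneg_left hEE hnn
    rw [heval, hVid, hVc1]
    have hfin : (Vm false uId + Vm false uNot) * E + Vm false (uC true) ≤ D := by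
      have : (Vm false uId + Vm false uNot) * E
          = Vm false uId * E + Vm false uNot * E := by ring
      rw [this]
      linarith
    calc (Vm false uId + Vm false uNot) * ((W false true + W true false) / 2)
          + Vm false (uC true)
        ≤ (Vm false uId + Vm false uNot) * E + Vm false (uC true) := by
          rw [← hVid]; linarith [hmul]
      _ ≤ D := hfin
  · intro W hW
    obtain ⟨hWch, hWe⟩ := hW
    calc phi unifBool V' W ≤ phi unifBool V' (BSC E) :=
          phi_lessNoisy E hE0 hE V' hV'ch hpnot hpI hp0 hp2 W hWch hWe
      _ ≤ phi unifBool Vm (BSC E) := by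
          rw [hV']
          exact phi_mer unif_nonneg unif_total hVmch hB
      _ ≤ (phi unifBool V (BSC E) + phi unifBool (Vs V) (BSC E)) / 2 := by
          rw [hVm]
          exact phi_mix unif_nonneg unif_total hV hVs hB
      _ = phi unifBool V (BSC E) := by rw [phi_Vs]; ring

/-- **binary Hamming example.** Let `𝒳 = 𝒴 = 𝒳̂ = {0,1}`, `P_X` uniform, with
both `e` and `d` the Hamming distortion, and `0 < E ≤ 1/2`.  Then the matching condition holds
and `R_m(D|E) = max_{W ∈ 𝒲₁(E)} min_{V ∈ 𝒱(E,D)} φ(V,W)`; moreover the maximizing channel is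
the binary symmetric channel `BSC(E)`.
(The two bounds of the paper's Theorem 1 are taken as hypotheses.) -/
theorem binary_hamming
    (D E : ℝ) (hD : 0 ≤ D) (hE0 : 0 < E) (hE : E ≤ 1 / 2)
    -- the converse bound of Theorem 1
    (hlow : sSup ((fun W => RWZ unifBool hamBool D W) '' W1 unifBool hamBool E) ≤
      Rm unifBool hamBool hamBool D E)
    -- the direct bound of Theorem 1
    (hup : Rm unifBool hamBool hamBool D E ≤
      sSup ((fun W => RWZt unifBool hamBool hamBool D E W) '' W1 unifBool hamBool E)) :
    Rm unifBool hamBool hamBool D E =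
      sSup ((fun W => sInf ((fun V => phi unifBool V W) ''
        Vrob unifBool hamBool hamBool E D)) '' W1 unifBool hamBool E) ∧
    BSC E ∈ W1 unifBool hamBool E ∧
    sInf ((fun V => phi unifBool V (BSC E)) '' Vrob unifBool hamBool hamBool E D) =
      sSup ((fun W => sInf ((fun V => phi unifBool V W) ''
        Vrob unifBool hamBool hamBool E D)) '' W1 unifBool hamBool E) := by
  have hBSC : BSC E ∈ W1 unifBool hamBool E := BSC_mem (le_of_lt hE0) (by linarith)
  have hBch : IsChannel (BSC E) := BSC_channel (le_of_lt hE0) (by linarith)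
  -- bounded below
  have hbb : ∀ W : Bool → Bool → ℝ, IsChannel W →
      BddBelow ((fun V => phi unifBool V W) '' Vrob unifBool hamBool hamBool E D) := by
    intro W hWch
    refine ⟨-56, ?_⟩
    rintro r ⟨V, hVmem, rfl⟩
    exact phi_ge hVmem.1 hWch
  have hbbset : ∀ W : Bool → Bool → ℝ, IsChannel W →
      BddBelow ((fun V => phi unifBool V W) '' Vset unifBool hamBool W D) := by
    intro W hWch
    refine ⟨-56, ?_⟩
    rintro r ⟨V, hVmem, rfl⟩
    exact phi_ge hVmem.1 hWch
  -- A2 : for every W in the class, sInf (phi · W '' Vrob) ≤ RWZ(D | BSC E)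
  have hA2 : ∀ W ∈ W1 unifBool hamBool E,
      sInf ((fun V => phi unifBool V W) '' Vrob unifBool hamBool hamBool E D)
        ≤ RWZ unifBool hamBool D (BSC E) := by
    intro W hW
    rw [RWZ]
    refine le_csInf ⟨phi unifBool Vch (BSC E), Vch, Vch_Vset hD, rfl⟩ ?_
    rintro r ⟨V, hVmem, rfl⟩
    obtain ⟨V', hV'rob, hchain⟩ := key_transform D E hE0 hE V hVmem.1 hVmem.2
    have h1 : sInf ((fun V => phi unifBool V W) '' Vrob unifBool hamBool hamBool E D)
        ≤ phi unifBool V' W := csInf_le (hbb W hW.1) ⟨V', hV'rob, rfl⟩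
    exact h1.trans (hchain W hW)
  -- R0 ≤ sInf over the robust class at the BSC
  have hR0G : RWZ unifBool hamBool D (BSC E)
      ≤ sInf ((fun V => phi unifBool V (BSC E)) '' Vrob unifBool hamBool hamBool E D) := by
    rw [RWZ]
    refine csInf_le_csInf (hbbset (BSC E) hBch)
      ⟨phi unifBool Vch (BSC E), Vch, Vch_Vrob hD, rfl⟩ ?_
    rintro r ⟨V, hVmem, rfl⟩
    exact ⟨V, ⟨hVmem.1, hVmem.2 (BSC E) hBSC⟩, rfl⟩
  -- boundedness of the two images
  have hS2bdd : BddAbove ((fun W => sInf ((fun V => phi unifBool V W) ''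
      Vrob unifBool hamBool hamBool E D)) '' W1 unifBool hamBool E) := by
    refine ⟨RWZ unifBool hamBool D (BSC E), ?_⟩
    rintro r ⟨W, hW, rfl⟩
    exact hA2 W hW
  have hS2ne : ((fun W => sInf ((fun V => phi unifBool V W) ''
      Vrob unifBool hamBool hamBool E D)) '' W1 unifBool hamBool E).Nonempty :=
    ⟨_, BSC E, hBSC, rfl⟩
  have hS2le : sSup ((fun W => sInf ((fun V => phi unifBool V W) ''
      Vrob unifBool hamBool hamBool E D)) '' W1 unifBool hamBool E)
      ≤ RWZ unifBool hamBool D (BSC E) := by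
    refine csSup_le hS2ne ?_
    rintro r ⟨W, hW, rfl⟩
    exact hA2 W hW
  have hS1bdd : BddAbove ((fun W => RWZ unifBool hamBool D W) '' W1 unifBool hamBool E) := by
    refine ⟨56, ?_⟩
    rintro r ⟨W, hW, rfl⟩
    have h1 : RWZ unifBool hamBool D W ≤ phi unifBool Vch W := by
      rw [RWZ]
      exact csInf_le (hbbset W hW.1) ⟨Vch, Vch_Vset hD, rfl⟩
    exact h1.trans (phi_le Vch_channel hW.1)
  have hR0S1 : RWZ unifBool hamBool D (BSC E)
      ≤ sSup ((fun W => RWZ unifBool hamBool D W) '' W1 unifBool hamBool E) :=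
    le_csSup hS1bdd ⟨BSC E, hBSC, rfl⟩
  -- identify the RWZt image with the explicit image
  have himg : ((fun W => RWZt unifBool hamBool hamBool D E W) '' W1 unifBool hamBool E)
      = ((fun W => sInf ((fun V => phi unifBool V W) ''
          Vrob unifBool hamBool hamBool E D)) '' W1 unifBool hamBool E) := rfl
  rw [himg] at hup
  -- chain of inequalities
  have e2 : sSup ((fun W => sInf ((fun V => phi unifBool V W) ''
      Vrob unifBool hamBool hamBool E D)) '' W1 unifBool hamBool E)
      ≤ Rm unifBool hamBool hamBool D E := by
    calc sSup _ ≤ RWZ unifBool hamBool D (BSC E) := hS2le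
      _ ≤ sSup ((fun W => RWZ unifBool hamBool D W) '' W1 unifBool hamBool E) := hR0S1
      _ ≤ Rm unifBool hamBool hamBool D E := hlow
  refine ⟨le_antisymm hup e2, hBSC, ?_⟩
  -- the BSC attains the maximum
  have hle : sInf ((fun V => phi unifBool V (BSC E)) '' Vrob unifBool hamBool hamBool E D)
      ≤ sSup ((fun W => sInf ((fun V => phi unifBool V W) ''
        Vrob unifBool hamBool hamBool E D)) '' W1 unifBool hamBool E) :=
    le_csSup hS2bdd ⟨BSC E, hBSC, rfl⟩
  have hge : sSup ((fun W => sInf ((fun V => phi unifBool V W) ''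
      Vrob unifBool hamBool hamBool E D)) '' W1 unifBool hamBool E)
      ≤ sInf ((fun V => phi unifBool V (BSC E)) '' Vrob unifBool hamBool hamBool E D) :=
    hS2le.trans hR0G
  exact le_antisymm hle hge

end UWZ
end
end

section
/- Continuity of the Wyner–Ziv rate-distortion function in the side-information channel: for every D > 0, the map W ↦ R_WZ(D|W) is continuous on the set 𝒫(𝒴|𝒳) of channels from 𝒳 to 𝒴. In particular, |R_WZ(D|W₁) − R_WZ(D|W₂)| ≤ ν(Δ(W₁,W₂)) + ν(2ε/(D+ε)) with ε = d_max Δ(W₁,W₂) and Δ(W₁,W₂) = ∑_{x,y} |P_X(x)W₁(y|x) − P_X(x)W₂(y|x)|, where ν is a modulus of continuity (from Fannes' inequality) with ν(t) → 0 as t → 0. -/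
open scoped BigOperators

noncomputable section

namespace UWZ

section Aux

lemma continuous_ent {A : Type*} [Fintype A] : Continuous (ent (A := A)) := by
  have h : (ent (A := A)) = fun P => -∑ a, (P a * Real.log (P a)) / Real.log 2 := by
    funext P
    simp [ent, Real.logb, div_eq_mul_inv, mul_assoc]
  rw [h]
  exact (continuous_finset_sum _ fun a _ =>
    ((Real.continuous_mul_log.comp (continuous_apply a)).div_const _)).neg

lemma continuous_mutInf {A B : Type*} [Fintype A] [Fintype B] :
    Continuous (mutInf (A := A) (B := B)) := by
  unfold mutInf
  refine ((Continuous.add ?_ ?_).sub continuous_ent)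
  · exact continuous_ent.comp
      (continuous_pi fun a => continuous_finset_sum _ fun b _ => continuous_apply _)
  · exact continuous_ent.comp
      (continuous_pi fun b => continuous_finset_sum _ fun a _ => continuous_apply _)

lemma IsDist.entry_le_one {A : Type*} [Fintype A] {P : A → ℝ} (h : IsDist P) (a : A) :
    P a ≤ 1 := by
  have := Finset.single_le_sum (f := P) (fun i _ => h.1 i) (Finset.mem_univ a)
  simpa [h.2] using this

lemma channel_mem_box {A B : Type*} [Fintype A] [Fintype B] {W : A → B → ℝ}
    (hW : IsChannel W) :
    W ∈ Set.univ.pi (fun _ : A => Set.univ.pi fun _ : B => Set.Icc (0:ℝ) 1) :=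
  fun a _ b _ => ⟨(hW a).1 b, (hW a).entry_le_one b⟩

variable {X Y Xh : Type*} [Fintype X] [Fintype Y] [Fintype Xh] [DecidableEq Y]

/-- the deterministic test channel built from a zero-distortion letter selection. -/
noncomputable def Vt (c : X → Xh) : X → (Y → Xh) → ℝ := fun x u => ind (u = fun _ => c x)

lemma Vt_channel (c : X → Xh) : IsChannel (Vt (Y := Y) c) := by
  classical
  intro x
  constructor
  · intro u; unfold Vt ind; split <;> norm_num
  · unfold Vt
    rw [Finset.sum_eq_single (fun _ => c x)]
    · simp [ind]
    · intro u _ hu; simp [ind, hu]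
    · intro h; exact absurd (Finset.mem_univ _) h

lemma dVW_Vt {P : X → ℝ} {d : X → Xh → ℝ} {c : X → Xh} (hc : ∀ x, d x (c x) = 0)
    (W : X → Y → ℝ) : dVW P d (Vt c) W = 0 := by
  classical
  unfold dVW
  refine Finset.sum_eq_zero fun u _ => Finset.sum_eq_zero fun x _ =>
    Finset.sum_eq_zero fun y _ => ?_
  by_cases h : u = fun _ => c x
  · subst h; simp [hc x]
  · simp [Vt, ind, h]

lemma dVW_convex (P : X → ℝ) (d : X → Xh → ℝ) (V V' : X → (Y → Xh) → ℝ)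
    (W : X → Y → ℝ) (a b : ℝ) :
    dVW P d (fun x u => a * V x u + b * V' x u) W
      = a * dVW P d V W + b * dVW P d V' W := by
  unfold dVW
  rw [Finset.mul_sum, Finset.mul_sum, ← Finset.sum_add_distrib]
  refine Finset.sum_congr rfl fun u _ => ?_
  rw [Finset.mul_sum, Finset.mul_sum, ← Finset.sum_add_distrib]
  refine Finset.sum_congr rfl fun x _ => ?_
  rw [Finset.mul_sum, Finset.mul_sum, ← Finset.sum_add_distrib]
  refine Finset.sum_congr rfl fun y _ => ?_
  ring

lemma dVW_le_of_close {P : X → ℝ} {d : X → Xh → ℝ} {dmax : ℝ}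
    (hd0 : ∀ x xh, 0 ≤ d x xh) (hdmax : ∀ x xh, d x xh ≤ dmax)
    {V : X → (Y → Xh) → ℝ} (hV : IsChannel V) (W W' : X → Y → ℝ) :
    dVW P d V W ≤ dVW P d V W' + dmax * ∑ x, ∑ y, |P x * W x y - P x * W' x y| := by
  have step1 : ∀ (u : Y → Xh) (x : X) (y : Y),
      P x * V x u * W x y * d x (u y) - P x * V x u * W' x y * d x (u y)
        ≤ V x u * (dmax * |P x * W x y - P x * W' x y|) := by
    intro u x y
    have h1 : P x * V x u * W x y * d x (u y) - P x * V x u * W' x y * d x (u y)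
        = (V x u * d x (u y)) * (P x * W x y - P x * W' x y) := by ring
    rw [h1]
    calc (V x u * d x (u y)) * (P x * W x y - P x * W' x y)
        ≤ (V x u * d x (u y)) * |P x * W x y - P x * W' x y| :=
          mul_le_mul_of_nonneg_left (le_abs_self _)
            (mul_nonneg ((hV x).1 u) (hd0 _ _))
      _ ≤ (V x u * dmax) * |P x * W x y - P x * W' x y| :=
          mul_le_mul_of_nonneg_right
            (mul_le_mul_of_nonneg_left (hdmax _ _) ((hV x).1 u)) (abs_nonneg _)
      _ = V x u * (dmax * |P x * W x y - P x * W' x y|) := by ring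
  have key : dVW P d V W - dVW P d V W'
      ≤ dmax * ∑ x, ∑ y, |P x * W x y - P x * W' x y| := by
    unfold dVW
    calc (∑ u : Y → Xh, ∑ x, ∑ y, P x * V x u * W x y * d x (u y))
          - ∑ u : Y → Xh, ∑ x, ∑ y, P x * V x u * W' x y * d x (u y)
        = ∑ u : Y → Xh, ∑ x, ∑ y,
            (P x * V x u * W x y * d x (u y) - P x * V x u * W' x y * d x (u y)) := by
          rw [← Finset.sum_sub_distrib]
          refine Finset.sum_congr rfl fun u _ => ?_
          rw [← Finset.sum_sub_distrib]
          exact Finset.sum_congr rfl fun x _ => (Finset.sum_sub_distrib _ _).symm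
      _ ≤ ∑ u : Y → Xh, ∑ x, ∑ y, V x u * (dmax * |P x * W x y - P x * W' x y|) :=
          Finset.sum_le_sum fun u _ => Finset.sum_le_sum fun x _ =>
            Finset.sum_le_sum fun y _ => step1 u x y
      _ = ∑ x, ∑ u : Y → Xh, ∑ y, V x u * (dmax * |P x * W x y - P x * W' x y|) :=
          Finset.sum_comm
      _ = ∑ x, ∑ y, dmax * |P x * W x y - P x * W' x y| := by
          refine Finset.sum_congr rfl fun x _ => ?_
          calc ∑ u : Y → Xh, ∑ y, V x u * (dmax * |P x * W x y - P x * W' x y|)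
              = ∑ u : Y → Xh, V x u * ∑ y, dmax * |P x * W x y - P x * W' x y| := by
                refine Finset.sum_congr rfl fun u _ => ?_
                rw [Finset.mul_sum]
            _ = (∑ u : Y → Xh, V x u) * ∑ y, dmax * |P x * W x y - P x * W' x y| :=
                (Finset.sum_mul _ _ _).symm
            _ = ∑ y, dmax * |P x * W x y - P x * W' x y| := by rw [(hV x).2, one_mul]
      _ = dmax * ∑ x, ∑ y, |P x * W x y - P x * W' x y| := by
          rw [Finset.mul_sum]
          exact Finset.sum_congr rfl fun x _ => (Finset.mul_sum _ _ _).symm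
  linarith

lemma phi_cont (P : X → ℝ) :
    Continuous fun p : (X → (Y → Xh) → ℝ) × (X → Y → ℝ) => phi P p.1 p.2 := by
  unfold phi
  refine Continuous.sub ?_ ?_
  · refine continuous_mutInf.comp (continuous_pi fun q => ?_)
    have h1 : Continuous fun p : (X → (Y → Xh) → ℝ) × (X → Y → ℝ) => p.1 q.2 q.1 :=
      (continuous_apply q.1).comp ((continuous_apply q.2).comp continuous_fst)
    exact continuous_const.mul h1
  · refine continuous_mutInf.comp (continuous_pi fun q => ?_)
    refine continuous_finset_sum _ fun x _ => ?_
    have h1 : Continuous fun p : (X → (Y → Xh) → ℝ) × (X → Y → ℝ) => p.1 x q.1 :=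
      (continuous_apply q.1).comp ((continuous_apply x).comp continuous_fst)
    have h2 : Continuous fun p : (X → (Y → Xh) → ℝ) × (X → Y → ℝ) => p.2 x q.2 :=
      (continuous_apply q.2).comp ((continuous_apply x).comp continuous_snd)
    exact (continuous_const.mul h1).mul h2

lemma exists_phi_bound (P : X → ℝ) :
    ∃ C : ℝ, 0 ≤ C ∧ ∀ (V : X → (Y → Xh) → ℝ) (W : X → Y → ℝ),
      IsChannel V → IsChannel W → |phi P V W| ≤ C := by
  classical
  set K := (Set.univ.pi fun _ : X => Set.univ.pi fun _ : Y → Xh => Set.Icc (0:ℝ) 1) ×ˢ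
    (Set.univ.pi fun _ : X => Set.univ.pi fun _ : Y => Set.Icc (0:ℝ) 1) with hK
  have hKc : IsCompact K :=
    (isCompact_univ_pi fun _ => isCompact_univ_pi fun _ => isCompact_Icc).prod
      (isCompact_univ_pi fun _ => isCompact_univ_pi fun _ => isCompact_Icc)
  obtain ⟨C, hC⟩ := hKc.exists_bound_of_continuousOn (phi_cont (Xh := Xh) P).continuousOn
  refine ⟨max C 0, le_max_right _ _, fun V W hV hW => ?_⟩
  have hmem : ((V, W) : (X → (Y → Xh) → ℝ) × (X → Y → ℝ)) ∈ K :=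
    ⟨channel_mem_box hV, channel_mem_box hW⟩
  have := hC (V, W) hmem
  rw [Real.norm_eq_abs] at this
  exact this.trans (le_max_left _ _)


/-- the function whose uniform continuity on a compact box drives the argument. -/
def gfun {A B C : Type*} [Fintype A] [Fintype B] [Fintype C] :
    ((A × B → ℝ) × (A × C → ℝ)) → ℝ := fun p => mutInf p.1 - mutInf p.2

lemma gfun_cont {A B C : Type*} [Fintype A] [Fintype B] [Fintype C] :
    Continuous (gfun (A := A) (B := B) (C := C)) :=
  (continuous_mutInf.comp continuous_fst).sub (continuous_mutInf.comp continuous_snd)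

lemma gfun_eq_phi (P : X → ℝ) (V : X → (Y → Xh) → ℝ) (W : X → Y → ℝ) :
    gfun (⟨fun q : (Y → Xh) × X => P q.2 * V q.2 q.1,
      fun q : (Y → Xh) × Y => ∑ x, P x * V x q.1 * W x q.2⟩) = phi P V W := rfl

lemma RWZ_close [Nonempty X] [Nonempty Xh] (P : X → ℝ) (hP : IsDist P)
    (d : X → Xh → ℝ) (dmax : ℝ) (hd0 : ∀ x xh, 0 ≤ d x xh)
    (hdmax : ∀ x xh, d x xh ≤ dmax) (hdZ : ∀ x, ∃ xh, d x xh = 0)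
    (D : ℝ) (hD : 0 < D) :
    ∀ ε > (0:ℝ), ∃ δ > (0:ℝ), ∀ W W' : X → Y → ℝ, IsChannel W → IsChannel W' →
      (∑ x, ∑ y, |P x * W x y - P x * W' x y|) ≤ δ →
      RWZ P d D W ≤ RWZ P d D W' + ε := by
  classical
  obtain ⟨C, hC0, hC⟩ := exists_phi_bound (Y := Y) (Xh := Xh) P
  choose c hc using hdZ
  have hVt : IsChannel (Vt (Y := Y) c) := Vt_channel c
  have hdm : 0 ≤ dmax :=
    le_trans (hd0 (Classical.arbitrary X) (Classical.arbitrary Xh)) (hdmax _ _)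
  set K : Set (((Y → Xh) × X → ℝ) × ((Y → Xh) × Y → ℝ)) :=
    (Set.univ.pi fun _ => Set.Icc (0:ℝ) 1) ×ˢ (Set.univ.pi fun _ => Set.Icc (0:ℝ) 1)
    with hKdef
  have hKc : IsCompact K := (isCompact_univ_pi fun _ => isCompact_Icc).prod
    (isCompact_univ_pi fun _ => isCompact_Icc)
  have hUC := hKc.uniformContinuousOn_of_continuous (gfun_cont).continuousOn
  intro ε hε
  obtain ⟨δ₂, hδ₂, hg⟩ := Metric.uniformContinuousOn_iff.1 hUC ε hε
  refine ⟨min (δ₂/4) (D*δ₂/(4*(dmax+1))), by positivity, ?_⟩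
  intro W W' hW hW' hΔδ
  set Δ : ℝ := ∑ x, ∑ y, |P x * W x y - P x * W' x y| with hΔdef
  have hΔ0 : 0 ≤ Δ :=
    Finset.sum_nonneg fun _ _ => Finset.sum_nonneg fun _ _ => abs_nonneg _
  have hden : 0 < D + dmax * Δ := by positivity
  set lam : ℝ := dmax * Δ / (D + dmax * Δ) with hlamdef
  have hlam0 : 0 ≤ lam := div_nonneg (by positivity) hden.le
  have hlam1 : lam ≤ 1 := by
    rw [hlamdef, div_le_one hden]; linarith
  have hlamD : lam * (D + dmax * Δ) = dmax * Δ := div_mul_cancel₀ _ hden.ne'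
  have hΔle : Δ ≤ δ₂/4 := le_trans hΔδ (min_le_left _ _)
  have hlam_le : lam ≤ δ₂/4 := by
    have h2 : Δ ≤ D*δ₂/(4*(dmax+1)) := le_trans hΔδ (min_le_right _ _)
    have h3 : dmax * Δ ≤ dmax * (D*δ₂/(4*(dmax+1))) := mul_le_mul_of_nonneg_left h2 hdm
    have h4 : dmax * (D*δ₂/(4*(dmax+1))) ≤ D*δ₂/4 := by
      have he : dmax * (D*δ₂/(4*(dmax+1))) = dmax*(D*δ₂) / (4*(dmax+1)) := by ring
      rw [he, div_le_div_iff₀ (by linarith) (by norm_num : (0:ℝ) < 4)]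
      nlinarith [mul_nonneg hD.le hδ₂.le]
    have h1 : dmax * Δ ≤ D * δ₂ / 4 := le_trans h3 h4
    rw [hlamdef, div_le_iff₀ hden]
    nlinarith [mul_nonneg hδ₂.le (mul_nonneg hdm hΔ0)]
  -- boundedness and nonemptiness facts
  have hVtmem : Vt (Y := Y) c ∈ Vset P d W' D := ⟨hVt, by rw [dVW_Vt hc]; exact hD.le⟩
  have hS'ne : ((fun V => phi P V W') '' Vset P d W' D).Nonempty :=
    ⟨_, Set.mem_image_of_mem _ hVtmem⟩
  have hSbdd : BddBelow ((fun V => phi P V W) '' Vset P d W D) := by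
    refine ⟨-C, fun r hr => ?_⟩
    obtain ⟨V, hVmem, rfl⟩ := hr
    exact (abs_le.1 (hC V W hVmem.1 hW)).1
  -- entrywise membership facts
  have hmemA : ∀ (V'' : X → (Y → Xh) → ℝ), IsChannel V'' →
      (fun q : (Y → Xh) × X => P q.2 * V'' q.2 q.1) ∈
        (Set.univ.pi fun _ : (Y → Xh) × X => Set.Icc (0:ℝ) 1) := by
    intro V'' hV'' q _
    show P q.2 * V'' q.2 q.1 ∈ Set.Icc (0:ℝ) 1
    have a1 := hP.entry_le_one q.2
    have a2 := (hV'' q.2).entry_le_one q.1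
    have a3 := (hV'' q.2).1 q.1
    have a4 := hP.1 q.2
    refine ⟨mul_nonneg a4 a3, ?_⟩
    calc P q.2 * V'' q.2 q.1 ≤ P q.2 * 1 := mul_le_mul_of_nonneg_left a2 a4
      _ = P q.2 := mul_one _
      _ ≤ 1 := a1
  have hmemJ : ∀ (V'' : X → (Y → Xh) → ℝ) (W'' : X → Y → ℝ),
      IsChannel V'' → IsChannel W'' →
      (fun q : (Y → Xh) × Y => ∑ x, P x * V'' x q.1 * W'' x q.2) ∈
        (Set.univ.pi fun _ : (Y → Xh) × Y => Set.Icc (0:ℝ) 1) := by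
    intro V'' W'' hV'' hW'' q _
    show (∑ x, P x * V'' x q.1 * W'' x q.2) ∈ Set.Icc (0:ℝ) 1
    constructor
    · exact Finset.sum_nonneg fun x _ =>
        mul_nonneg (mul_nonneg (hP.1 x) ((hV'' x).1 q.1)) ((hW'' x).1 q.2)
    · calc ∑ x, P x * V'' x q.1 * W'' x q.2 ≤ ∑ x, P x := by
            refine Finset.sum_le_sum fun x _ => ?_
            have a1 := (hV'' x).entry_le_one q.1
            have a2 := (hW'' x).entry_le_one q.2
            have a3 := (hV'' x).1 q.1
            have a4 := (hW'' x).1 q.2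
            have a5 := hP.1 x
            calc P x * V'' x q.1 * W'' x q.2 ≤ P x * V'' x q.1 * 1 :=
                  mul_le_mul_of_nonneg_left a2 (mul_nonneg a5 a3)
              _ = P x * V'' x q.1 := mul_one _
              _ ≤ P x * 1 := mul_le_mul_of_nonneg_left a1 a5
              _ = P x := mul_one _
      _ = 1 := hP.2
  -- main bound over the feasible set for `W'`
  have main : ∀ r ∈ (fun V => phi P V W') '' Vset P d W' D, RWZ P d D W - ε ≤ r := by
    rintro r ⟨V, ⟨hVch, hVd⟩, rfl⟩
    have hdiff1 : ∀ (x : X) (u : Y → Xh), |Vt c x u - V x u| ≤ 1 := by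
      intro x u
      have a1 := (hVt x).1 u
      have a2 := (hVt x).entry_le_one u
      have a3 := (hVch x).1 u
      have a4 := (hVch x).entry_le_one u
      rw [abs_le]; constructor <;> linarith
    set Vl : X → (Y → Xh) → ℝ := fun x u => (1 - lam) * V x u + lam * Vt c x u
      with hVl
    have hVlch : IsChannel Vl := by
      intro x
      constructor
      · intro u
        exact add_nonneg (mul_nonneg (by linarith) ((hVch x).1 u))
          (mul_nonneg hlam0 ((hVt x).1 u))
      · have hsum : ∑ u : Y → Xh, Vl x u = (1-lam) * (∑ u : Y → Xh, V x u) + lam * ∑ u : Y → Xh, Vt c x u := by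
          rw [hVl]
          rw [Finset.sum_add_distrib, ← Finset.mul_sum, ← Finset.mul_sum]
        rw [hsum, (hVch x).2, (hVt x).2]; ring
    have hfeas : dVW P d Vl W ≤ D := by
      have h1 : dVW P d Vl W = (1-lam) * dVW P d V W + lam * dVW P d (Vt c) W := by
        rw [hVl]; exact dVW_convex P d V (Vt c) W (1-lam) lam
      rw [h1, dVW_Vt hc, mul_zero, add_zero]
      have h2 : dVW P d V W ≤ D + dmax * Δ := by
        have := dVW_le_of_close (P := P) hd0 hdmax hVch W W'
        rw [← hΔdef] at this
        linarith
      calc (1-lam) * dVW P d V W ≤ (1-lam) * (D + dmax * Δ) :=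
            mul_le_mul_of_nonneg_left h2 (by linarith)
        _ = D := by rw [sub_mul, one_mul, hlamD]; ring
    -- distance estimates
    have hdistA : dist (fun q : (Y → Xh) × X => P q.2 * Vl q.2 q.1)
        (fun q : (Y → Xh) × X => P q.2 * V q.2 q.1) ≤ lam := by
      rw [dist_pi_le_iff hlam0]
      intro q
      rw [Real.dist_eq]
      have he : P q.2 * Vl q.2 q.1 - P q.2 * V q.2 q.1
          = (P q.2 * lam) * (Vt c q.2 q.1 - V q.2 q.1) := by
        rw [hVl]; ring
      rw [he, abs_mul]
      have h2 : |P q.2 * lam| = P q.2 * lam := abs_of_nonneg (mul_nonneg (hP.1 _) hlam0)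
      calc |P q.2 * lam| * |Vt c q.2 q.1 - V q.2 q.1|
          ≤ |P q.2 * lam| * 1 := mul_le_mul_of_nonneg_left (hdiff1 _ _) (abs_nonneg _)
        _ = P q.2 * lam := by rw [mul_one, h2]
        _ ≤ 1 * lam := mul_le_mul_of_nonneg_right (hP.entry_le_one _) hlam0
        _ = lam := one_mul _
    have hdistJ : dist (fun q : (Y → Xh) × Y => ∑ x, P x * Vl x q.1 * W x q.2)
        (fun q : (Y → Xh) × Y => ∑ x, P x * V x q.1 * W' x q.2) ≤ lam + Δ := by
      rw [dist_pi_le_iff (by linarith)]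
      intro q
      rw [Real.dist_eq]
      have hsplit : (∑ x, P x * Vl x q.1 * W x q.2) - ∑ x, P x * V x q.1 * W' x q.2
          = (∑ x, V x q.1 * (P x * W x q.2 - P x * W' x q.2))
            + lam * ∑ x, P x * (Vt c x q.1 - V x q.1) * W x q.2 := by
        rw [← Finset.sum_sub_distrib, Finset.mul_sum, ← Finset.sum_add_distrib]
        refine Finset.sum_congr rfl fun x _ => ?_
        rw [hVl]; ring
      rw [hsplit]
      refine le_trans (abs_add_le _ _) ?_
      have hb1 : |∑ x, V x q.1 * (P x * W x q.2 - P x * W' x q.2)| ≤ Δ := by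
        refine le_trans (Finset.abs_sum_le_sum_abs _ _) ?_
        calc ∑ x, |V x q.1 * (P x * W x q.2 - P x * W' x q.2)|
            ≤ ∑ x, |P x * W x q.2 - P x * W' x q.2| := by
              refine Finset.sum_le_sum fun x _ => ?_
              rw [abs_mul]
              calc |V x q.1| * |P x * W x q.2 - P x * W' x q.2|
                  ≤ 1 * |P x * W x q.2 - P x * W' x q.2| := by
                    refine mul_le_mul_of_nonneg_right ?_ (abs_nonneg _)
                    rw [abs_of_nonneg ((hVch x).1 q.1)]
                    exact (hVch x).entry_le_one q.1
                _ = |P x * W x q.2 - P x * W' x q.2| := one_mul _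
          _ ≤ Δ := by
              rw [hΔdef]
              refine Finset.sum_le_sum fun x _ => ?_
              exact Finset.single_le_sum
                (f := fun y => |P x * W x y - P x * W' x y|)
                (fun y _ => abs_nonneg _) (Finset.mem_univ q.2)
      have hb2 : |lam * ∑ x, P x * (Vt c x q.1 - V x q.1) * W x q.2| ≤ lam := by
        rw [abs_mul, abs_of_nonneg hlam0]
        have hin : |∑ x, P x * (Vt c x q.1 - V x q.1) * W x q.2| ≤ 1 := by
          refine le_trans (Finset.abs_sum_le_sum_abs _ _) ?_
          calc ∑ x, |P x * (Vt c x q.1 - V x q.1) * W x q.2| ≤ ∑ x, P x := by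
                refine Finset.sum_le_sum fun x _ => ?_
                rw [abs_mul, abs_mul, abs_of_nonneg (hP.1 x)]
                have e1 := hdiff1 x q.1
                have e2 : |W x q.2| ≤ 1 := by
                  rw [abs_of_nonneg ((hW x).1 q.2)]
                  exact (hW x).entry_le_one q.2
                have e3 := abs_nonneg (Vt c x q.1 - V x q.1)
                have e4 := abs_nonneg (W x q.2)
                have e5 := hP.1 x
                calc P x * |Vt c x q.1 - V x q.1| * |W x q.2|
                    ≤ P x * |Vt c x q.1 - V x q.1| * 1 :=
                      mul_le_mul_of_nonneg_left e2 (mul_nonneg e5 e3)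
                  _ = P x * |Vt c x q.1 - V x q.1| := mul_one _
                  _ ≤ P x * 1 := mul_le_mul_of_nonneg_left e1 e5
                  _ = P x := mul_one _
            _ = 1 := hP.2
        calc lam * |∑ x, P x * (Vt c x q.1 - V x q.1) * W x q.2| ≤ lam * 1 :=
              mul_le_mul_of_nonneg_left hin hlam0
          _ = lam := mul_one _
      linarith
    -- apply uniform continuity
    have hpmem : ((fun q : (Y → Xh) × X => P q.2 * Vl q.2 q.1,
        fun q : (Y → Xh) × Y => ∑ x, P x * Vl x q.1 * W x q.2) :
        ((Y → Xh) × X → ℝ) × ((Y → Xh) × Y → ℝ)) ∈ K :=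
      ⟨hmemA Vl hVlch, hmemJ Vl W hVlch hW⟩
    have hqmem : ((fun q : (Y → Xh) × X => P q.2 * V q.2 q.1,
        fun q : (Y → Xh) × Y => ∑ x, P x * V x q.1 * W' x q.2) :
        ((Y → Xh) × X → ℝ) × ((Y → Xh) × Y → ℝ)) ∈ K :=
      ⟨hmemA V hVch, hmemJ V W' hVch hW'⟩
    have hdistlt : dist
        ((fun q : (Y → Xh) × X => P q.2 * Vl q.2 q.1,
          fun q : (Y → Xh) × Y => ∑ x, P x * Vl x q.1 * W x q.2) :
          ((Y → Xh) × X → ℝ) × ((Y → Xh) × Y → ℝ))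
        (fun q : (Y → Xh) × X => P q.2 * V q.2 q.1,
          fun q : (Y → Xh) × Y => ∑ x, P x * V x q.1 * W' x q.2) < δ₂ := by
      rw [Prod.dist_eq]
      have h1 : lam + Δ < δ₂ := by linarith
      exact max_lt (lt_of_le_of_lt hdistA (by linarith)) (lt_of_le_of_lt hdistJ h1)
    have hphi := hg _ hpmem _ hqmem hdistlt
    rw [gfun_eq_phi, gfun_eq_phi, Real.dist_eq] at hphi
    have hlt : phi P Vl W - phi P V W' < ε := lt_of_le_of_lt (le_abs_self _) hphi
    have hle1 : RWZ P d D W ≤ phi P Vl W :=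
      csInf_le hSbdd (Set.mem_image_of_mem _ ⟨hVlch, hfeas⟩)
    linarith
  have hfinal : RWZ P d D W - ε ≤ RWZ P d D W' := le_csInf hS'ne main
  linarith

lemma RWZ_abs_close [Nonempty X] [Nonempty Xh] (P : X → ℝ) (hP : IsDist P)
    (d : X → Xh → ℝ) (dmax : ℝ) (hd0 : ∀ x xh, 0 ≤ d x xh)
    (hdmax : ∀ x xh, d x xh ≤ dmax) (hdZ : ∀ x, ∃ xh, d x xh = 0)
    (D : ℝ) (hD : 0 < D) :
    ∀ ε > (0:ℝ), ∃ δ > (0:ℝ), ∀ W W' : X → Y → ℝ, IsChannel W → IsChannel W' →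
      (∑ x, ∑ y, |P x * W x y - P x * W' x y|) ≤ δ →
      |RWZ P d D W - RWZ P d D W'| ≤ ε := by
  intro ε hε
  obtain ⟨δ, hδ, h⟩ := RWZ_close (Y := Y) P hP d dmax hd0 hdmax hdZ D hD (ε/2)
    (by linarith)
  refine ⟨δ, hδ, fun W W' hW hW' hΔ => ?_⟩
  have hΔ' : (∑ x, ∑ y, |P x * W' x y - P x * W x y|) ≤ δ := by
    have : (∑ x, ∑ y, |P x * W' x y - P x * W x y|)
        = ∑ x, ∑ y, |P x * W x y - P x * W' x y| := by
      refine Finset.sum_congr rfl fun x _ => Finset.sum_congr rfl fun y _ => ?_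
      exact abs_sub_comm _ _
    rw [this]; exact hΔ
  have h1 := h W W' hW hW' hΔ
  have h2 := h W' W hW' hW hΔ'
  rw [abs_le]; constructor <;> linarith


end Aux

/-- **continuity of the Wyner–Ziv rate-distortion function in the
side-information channel.** For every `D > 0`, the map `W ↦ R_WZ(D|W)` is continuous on
the set of channels from `𝒳` to `𝒴`.  In particular, there is a modulus of continuity `ν`
(with `ν(t) → 0` as `t ↓ 0`) such that
`|R_WZ(D|W₁) − R_WZ(D|W₂)| ≤ ν(Δ(W₁,W₂)) + ν(2ε/(D+ε))` with `ε = d_max Δ(W₁,W₂)` and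
`Δ(W₁,W₂) = ∑_{x,y} |P_X(x)W₁(y|x) − P_X(x)W₂(y|x)|`. -/
theorem RWZ_continuous
    {X Y Xh : Type*} [Fintype X] [Fintype Y] [Fintype Xh] [DecidableEq Y]
    [Nonempty X] [Nonempty Y] [Nonempty Xh]
    (P : X → ℝ) (hP : IsDist P)
    (d : X → Xh → ℝ) (dmax : ℝ) (hd0 : ∀ x xh, 0 ≤ d x xh)
    (hdmax : ∀ x xh, d x xh ≤ dmax) (hdZ : ∀ x, ∃ xh, d x xh = 0)
    (D : ℝ) (hD : 0 < D) :
    ContinuousOn (fun W : X → Y → ℝ => RWZ P d D W) {W : X → Y → ℝ | IsChannel W} ∧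
    ∃ ν : ℝ → ℝ, (∀ t, 0 ≤ ν t) ∧
      Filter.Tendsto ν (nhdsWithin 0 (Set.Ioi (0:ℝ))) (nhds 0) ∧
      ∀ W₁ W₂ : X → Y → ℝ, IsChannel W₁ → IsChannel W₂ →
        |RWZ P d D W₁ - RWZ P d D W₂| ≤
          ν (∑ x, ∑ y, |P x * W₁ x y - P x * W₂ x y|) +
          ν (2 * (dmax * ∑ x, ∑ y, |P x * W₁ x y - P x * W₂ x y|) /
             (D + dmax * ∑ x, ∑ y, |P x * W₁ x y - P x * W₂ x y|)) := by
  classical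
  obtain ⟨C, hC0, hC⟩ := exists_phi_bound (Y := Y) (Xh := Xh) P
  choose c hc using hdZ
  have hVt : IsChannel (Vt (Y := Y) c) := Vt_channel c
  have hdZ' : ∀ x, ∃ xh, d x xh = 0 := fun x => ⟨c x, hc x⟩
  have hVtmem : ∀ W : X → Y → ℝ, Vt (Y := Y) c ∈ Vset P d W D :=
    fun W => ⟨hVt, by rw [dVW_Vt hc]; exact hD.le⟩
  have hSne : ∀ W : X → Y → ℝ, ((fun V => phi P V W) '' Vset P d W D).Nonempty :=
    fun W => ⟨_, Set.mem_image_of_mem _ (hVtmem W)⟩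
  have hSbdd : ∀ W : X → Y → ℝ, IsChannel W →
      BddBelow ((fun V => phi P V W) '' Vset P d W D) := by
    intro W hW
    refine ⟨-C, fun r hr => ?_⟩
    obtain ⟨V, hV, rfl⟩ := hr
    exact (abs_le.1 (hC V W hV.1 hW)).1
  have hub : ∀ W : X → Y → ℝ, IsChannel W → RWZ P d D W ≤ C := by
    intro W hW
    refine le_trans (csInf_le (hSbdd W hW) (Set.mem_image_of_mem _ (hVtmem W))) ?_
    exact (abs_le.1 (hC _ W hVt hW)).2
  have hlb : ∀ W : X → Y → ℝ, IsChannel W → -C ≤ RWZ P d D W := by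
    intro W hW
    refine le_csInf (hSne W) ?_
    rintro r ⟨V, hV, rfl⟩
    exact (abs_le.1 (hC V W hV.1 hW)).1
  constructor
  · -- continuity
    rw [Metric.continuousOn_iff]
    intro W₀ hW₀ ε hε
    obtain ⟨δ, hδ, hkey⟩ := RWZ_abs_close (Y := Y) P hP d dmax hd0 hdmax hdZ' D hD
      (ε/2) (by linarith)
    set N : ℝ := (Fintype.card X : ℝ) * (Fintype.card Y) + 1 with hN
    have hNpos : 0 < N := by positivity
    refine ⟨δ / N, by positivity, ?_⟩
    intro W hW hdist
    have hΔ : (∑ x, ∑ y, |P x * W x y - P x * W₀ x y|) ≤ δ := by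
      have hb : ∀ (x : X) (y : Y), |P x * W x y - P x * W₀ x y| ≤ dist W W₀ := by
        intro x y
        have e : P x * W x y - P x * W₀ x y = P x * (W x y - W₀ x y) := by ring
        rw [e, abs_mul, abs_of_nonneg (hP.1 x)]
        have h2 : |W x y - W₀ x y| ≤ dist W W₀ := by
          rw [← Real.dist_eq]
          exact le_trans (dist_le_pi_dist (W x) (W₀ x) y) (dist_le_pi_dist W W₀ x)
        calc P x * |W x y - W₀ x y| ≤ 1 * |W x y - W₀ x y| :=
              mul_le_mul_of_nonneg_right (hP.entry_le_one x) (abs_nonneg _)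
          _ = |W x y - W₀ x y| := one_mul _
          _ ≤ dist W W₀ := h2
      have hsum : (∑ x, ∑ y, |P x * W x y - P x * W₀ x y|)
          ≤ ∑ _x : X, ∑ _y : Y, dist W W₀ :=
        Finset.sum_le_sum fun x _ => Finset.sum_le_sum fun y _ => hb x y
      have hconst : (∑ _x : X, ∑ _y : Y, dist W W₀)
          = ((Fintype.card X : ℝ) * (Fintype.card Y)) * dist W W₀ := by
        simp [Finset.sum_const, Finset.card_univ, nsmul_eq_mul]
        ring
      have hc1 : ((Fintype.card X : ℝ) * (Fintype.card Y)) ≤ N := by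
        rw [hN]; linarith
      have hd0' : (0:ℝ) ≤ dist W W₀ := dist_nonneg
      have hfin : ((Fintype.card X : ℝ) * (Fintype.card Y)) * dist W W₀ ≤ δ := by
        calc ((Fintype.card X : ℝ) * (Fintype.card Y)) * dist W W₀
            ≤ N * dist W W₀ := mul_le_mul_of_nonneg_right hc1 hd0'
          _ ≤ N * (δ / N) := mul_le_mul_of_nonneg_left hdist.le hNpos.le
          _ = δ := by field_simp
      calc (∑ x, ∑ y, |P x * W x y - P x * W₀ x y|)
          ≤ ∑ _x : X, ∑ _y : Y, dist W W₀ := hsum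
        _ = ((Fintype.card X : ℝ) * (Fintype.card Y)) * dist W W₀ := hconst
        _ ≤ δ := hfin
    have hclose := hkey W W₀ hW hW₀ hΔ
    rw [Real.dist_eq]
    exact lt_of_le_of_lt hclose (by linarith)
  · -- modulus of continuity
    set S : ℝ → Set ℝ := fun t => {r | r = 0 ∨ ∃ W W' : X → Y → ℝ,
      IsChannel W ∧ IsChannel W' ∧
      (∑ x, ∑ y, |P x * W x y - P x * W' x y|) ≤ t ∧
      r = |RWZ P d D W - RWZ P d D W'|} with hS
    have hSne' : ∀ t, (S t).Nonempty := fun t => ⟨0, Or.inl rfl⟩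
    have hSbddA : ∀ t, BddAbove (S t) := by
      intro t
      refine ⟨2*C, fun r hr => ?_⟩
      rcases hr with rfl | ⟨W, W', hW, hW', _, rfl⟩
      · linarith
      · exact abs_le.2 ⟨by linarith [hub W' hW', hlb W hW], by linarith [hub W hW, hlb W' hW']⟩
    refine ⟨fun t => sSup (S t), ?_, ?_, ?_⟩
    · intro t; exact le_csSup (hSbddA t) (Or.inl rfl)
    · rw [Metric.tendsto_nhdsWithin_nhds]
      intro ε hε
      obtain ⟨δ, hδ, hkey⟩ := RWZ_abs_close (Y := Y) P hP d dmax hd0 hdmax hdZ' D hD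
        (ε/2) (by linarith)
      refine ⟨δ, hδ, ?_⟩
      intro t ht hdist
      have ht0 : (0:ℝ) < t := ht
      rw [Real.dist_eq, sub_zero, abs_of_pos ht0] at hdist
      have hupper : sSup (S t) ≤ ε/2 := by
        refine csSup_le (hSne' t) ?_
        rintro r (rfl | ⟨W, W', hW, hW', hΔ, rfl⟩)
        · linarith
        · exact hkey W W' hW hW' (le_trans hΔ hdist.le)
      have hlower : (0:ℝ) ≤ sSup (S t) := le_csSup (hSbddA t) (Or.inl rfl)
      rw [Real.dist_eq, sub_zero, abs_of_nonneg hlower]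
      linarith
    · intro W₁ W₂ hW₁ hW₂
      have h1 : |RWZ P d D W₁ - RWZ P d D W₂|
          ≤ sSup (S (∑ x, ∑ y, |P x * W₁ x y - P x * W₂ x y|)) :=
        le_csSup (hSbddA _) (Or.inr ⟨W₁, W₂, hW₁, hW₂, le_rfl, rfl⟩)
      have h2 : (0:ℝ) ≤ sSup (S (2 * (dmax * ∑ x, ∑ y, |P x * W₁ x y - P x * W₂ x y|) /
          (D + dmax * ∑ x, ∑ y, |P x * W₁ x y - P x * W₂ x y|))) :=
        le_csSup (hSbddA _) (Or.inl rfl)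
      linarith

end UWZ
end
end
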